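/- arXiv:1202.3907 — 8 statements merged into one kernel-verified Lean document; each statement's English description precedes it below -/
import Mathlib

section
/- For all integers k ≥ 2 and 2 ≤ j ≤ k, the threshold p̃ = sup{ p ∈ [0,1] : x = 0 is the unique fixed point of g_p in [0,1] } satisfies 0 < p̃ < 1. -/
open scoped Classical

noncomputable section

/-- The bootstrap recursion map `g_p(x) = p·∑_{i=k-j+1}^{k} C(k,i) xⁱ (1-x)^{k-i}`. -/
def g (k j : ℕ) (p x : ℝ) : ℝ :=
  p * ∑ i ∈ Finset.Icc (k - j + 1) k, (Nat.choose k i : ℝ) * x ^ i * (1 - x) ^ (k - i)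

/-- The critical threshold `p̃`: the supremum of the densities `p ∈ [0,1]` for which
`x = 0` is the unique fixed point of `g_p` in `[0,1]`. -/
def ptilde (k j : ℕ) : ℝ :=
  sSup {p : ℝ | p ∈ Set.Icc (0 : ℝ) 1 ∧ ∀ x ∈ Set.Icc (0 : ℝ) 1, g k j p x = x → x = 0}

lemma g_one_eq (k j : ℕ) (hk : 1 ≤ k) (hj : 1 ≤ j) (hjk : j ≤ k) (p : ℝ) : g k j p 1 = p := by
  unfold g
  rw [Finset.sum_eq_single_of_mem k (by simp [Finset.mem_Icc]; omega)]
  · simp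
  · intro i hi hne
    have h : k - i ≠ 0 := by simp [Finset.mem_Icc] at hi; omega
    simp [zero_pow h]

lemma S_le (k j : ℕ) {x : ℝ} (hx0 : 0 ≤ x) (hx1 : x ≤ 1) :
    ∑ i ∈ Finset.Icc (k - j + 1) k, (Nat.choose k i : ℝ) * x ^ i * (1 - x) ^ (k - i)
      ≤ 2 ^ k * x := by
  calc ∑ i ∈ Finset.Icc (k-j+1) k, (Nat.choose k i : ℝ) * x ^ i * (1-x)^(k-i)
      ≤ ∑ i ∈ Finset.Icc (k-j+1) k, (Nat.choose k i : ℝ) * x := by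
        apply Finset.sum_le_sum
        intro i hi
        have hi1 : 1 ≤ i := by simp [Finset.mem_Icc] at hi; omega
        have h1 : x ^ i ≤ x := by
          calc x ^ i ≤ x ^ 1 := pow_le_pow_of_le_one hx0 hx1 hi1
          _ = x := pow_one x
        have h2 : (1-x)^(k-i) ≤ 1 := pow_le_one₀ (by linarith) (by linarith)
        have hc : (0:ℝ) ≤ (Nat.choose k i : ℝ) := Nat.cast_nonneg _
        calc (Nat.choose k i : ℝ) * x ^ i * (1-x)^(k-i)
            ≤ (Nat.choose k i : ℝ) * x ^ i * 1 := by
              apply mul_le_mul_of_nonneg_left h2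
              exact mul_nonneg hc (pow_nonneg hx0 i)
          _ = (Nat.choose k i : ℝ) * x ^ i := mul_one _
          _ ≤ (Nat.choose k i : ℝ) * x := mul_le_mul_of_nonneg_left h1 hc
    _ = (∑ i ∈ Finset.Icc (k-j+1) k, (Nat.choose k i : ℝ)) * x := by rw [Finset.sum_mul]
    _ ≤ 2^k * x := by
        apply mul_le_mul_of_nonneg_right _ hx0
        calc ∑ i ∈ Finset.Icc (k-j+1) k, (Nat.choose k i : ℝ)
            ≤ ∑ i ∈ Finset.range (k+1), (Nat.choose k i : ℝ) :=
              Finset.sum_le_sum_of_subset_of_nonneg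
                (by intro i hi; simp [Finset.mem_Icc] at hi ⊢; omega)
                (fun i _ _ => Nat.cast_nonneg _)
          _ = 2^k := by
              rw [← Nat.cast_sum]
              norm_cast
              exact Nat.sum_range_choose k

lemma S_ge_pair (k j : ℕ) (hk : 2 ≤ k) (hj : 2 ≤ j) (hjk : j ≤ k) {x : ℝ}
    (hx0 : 0 ≤ x) (hx1 : x ≤ 1) :
    (k:ℝ) * x^(k-1) * (1-x) + x^k
      ≤ ∑ i ∈ Finset.Icc (k - j + 1) k, (Nat.choose k i : ℝ) * x ^ i * (1 - x) ^ (k - i) := by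
  have hpair : Finset.Icc (k-1) k = {k-1, k} := by
    ext i; simp [Finset.mem_Icc]; omega
  have hsub : Finset.Icc (k-1) k ⊆ Finset.Icc (k-j+1) k := by
    intro i hi; simp [Finset.mem_Icc] at hi ⊢; omega
  have h1x : (0:ℝ) ≤ 1 - x := by linarith
  calc (k:ℝ) * x^(k-1) * (1-x) + x^k
      = ∑ i ∈ Finset.Icc (k-1) k, (Nat.choose k i : ℝ) * x ^ i * (1-x)^(k-i) := by
        rw [hpair, Finset.sum_pair (by omega : k-1 ≠ k)]
        have hc1 : (Nat.choose k (k-1)) = k := by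
          have := Nat.choose_symm (show k-1 ≤ k by omega)
          rw [show k - (k-1) = 1 by omega] at this
          rw [← this, Nat.choose_one_right]
        have hkk : k - (k-1) = 1 := by omega
        rw [hc1, hkk, Nat.choose_self, Nat.sub_self]
        push_cast
        ring
    _ ≤ _ := by
        apply Finset.sum_le_sum_of_subset_of_nonneg hsub
        intro i _ _
        have := pow_nonneg hx0 i
        have := pow_nonneg h1x (k-i)
        positivity

lemma key (k : ℕ) (hk : 2 ≤ k) :
    (1 - 1/(k:ℝ)^2) < (k:ℝ) * (1 - 1/(k:ℝ)^2)^(k-1) * (1 - (1 - 1/(k:ℝ)^2))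
      + (1 - 1/(k:ℝ)^2)^k := by
  have hK : (2:ℝ) ≤ (k:ℝ) := by exact_mod_cast hk
  set t : ℝ := 1/(k:ℝ)^2 with ht_def
  have hkpos : (0:ℝ) < (k:ℝ)^2 := by positivity
  have ht0 : 0 < t := by positivity
  have hKt : (k:ℝ)^2 * t = 1 := by rw [ht_def]; field_simp
  have ht4 : t ≤ 1/4 := by
    rw [ht_def, div_le_div_iff₀ hkpos (by norm_num)]
    nlinarith
  -- Bernoulli
  have hB : 1 - ((k:ℝ) - 2) * t ≤ (1 - t)^(k-2) := by
    have := one_add_mul_le_pow (show (-2:ℝ) ≤ -t by linarith) (k-2)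
    have hc : ((k-2 : ℕ) : ℝ) = (k:ℝ) - 2 := by
      rw [Nat.cast_sub hk]; norm_num
    rw [hc] at this
    calc 1 - ((k:ℝ)-2)*t = 1 + ((k:ℝ)-2) * (-t) := by ring
      _ ≤ (1 + (-t))^(k-2) := this
      _ = (1 - t)^(k-2) := by ring_nf
  have hx0 : (0:ℝ) < 1 - t := by linarith
  have hpow1 : (1 - t)^(k-1) = (1-t)^(k-2) * (1-t) := by
    rw [← pow_succ]; congr 1; omega
  have hpowk : (1 - t)^k = (1-t)^(k-2) * (1-t)^2 := by
    rw [← pow_add]; congr 1; omega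
  have hApos : (0:ℝ) < (1-t)^(k-2) := pow_pos hx0 _
  rw [show (1 - (1 - t)) = t by ring, hpow1, hpowk]
  have h1 : (k:ℝ)*((1-t)^(k-2)*(1-t))*t + (1-t)^(k-2)*(1-t)^2
      = (1-t)^(k-2) * ((1-t)*(1+((k:ℝ)-1)*t)) := by ring
  rw [h1]
  have hfac : (0:ℝ) ≤ (1-t)*(1+((k:ℝ)-1)*t) := by nlinarith
  have h2 : (1 - ((k:ℝ)-2)*t) * ((1-t)*(1+((k:ℝ)-1)*t))
      ≤ (1-t)^(k-2) * ((1-t)*(1+((k:ℝ)-1)*t)) := mul_le_mul_of_nonneg_right hB hfac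
  have hpos : 0 < 1 - ((k:ℝ)-2)*((k:ℝ)-1)*t := by
    nlinarith [mul_pos (show (0:ℝ) < 3*(k:ℝ)-2 by linarith) ht0]
  have h3 : 1 - t < (1 - ((k:ℝ)-2)*t) * ((1-t)*(1+((k:ℝ)-1)*t)) := by
    nlinarith [mul_pos (mul_pos hx0 ht0) hpos]
  linarith

theorem ptilde_pos_lt_one (k j : ℕ) (hk : 2 ≤ k) (hj : 2 ≤ j) (hjk : j ≤ k) :
    0 < ptilde k j ∧ ptilde k j < 1 := by
  set S := {p : ℝ | p ∈ Set.Icc (0 : ℝ) 1 ∧ ∀ x ∈ Set.Icc (0 : ℝ) 1, g k j p x = x → x = 0}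
    with hS
  have hbdd : BddAbove S := ⟨1, fun p hp => hp.1.2⟩
  -- lower bound
  have hp0pos : (0:ℝ) < 1/2^(k+1) := by positivity
  have hp0mem : (1/2^(k+1) : ℝ) ∈ S := by
    constructor
    · constructor
      · positivity
      · rw [div_le_one (by positivity)]
        calc (1:ℝ) = 1^(k+1) := (one_pow _).symm
          _ ≤ 2^(k+1) := pow_le_pow_left₀ (by norm_num) (by norm_num) _
    · rintro x ⟨hx0, hx1⟩ hfix
      by_contra hxne
      have hxpos : 0 < x := lt_of_le_of_ne hx0 (Ne.symm hxne)
      have hle : g k j (1/2^(k+1)) x ≤ (1/2^(k+1)) * (2^k * x) := by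
        unfold g
        exact mul_le_mul_of_nonneg_left (S_le k j hx0 hx1) (le_of_lt hp0pos)
      have heq : (1/2^(k+1) : ℝ) * (2^k * x) = x/2 := by
        rw [pow_succ]
        field_simp
      rw [hfix, heq] at hle
      linarith
  -- upper bound
  set x₀ : ℝ := 1 - 1/(k:ℝ)^2 with hx₀def
  have hK : (2:ℝ) ≤ (k:ℝ) := by exact_mod_cast hk
  have hkpos : (0:ℝ) < (k:ℝ)^2 := by positivity
  have htle : 1/(k:ℝ)^2 ≤ 1/4 := by
    rw [div_le_div_iff₀ hkpos (by norm_num)]; nlinarith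
  have ht0 : 0 < 1/(k:ℝ)^2 := by positivity
  have hx₀pos : 0 < x₀ := by rw [hx₀def]; linarith
  have hx₀lt1 : x₀ < 1 := by rw [hx₀def]; linarith
  set G : ℝ := ∑ i ∈ Finset.Icc (k - j + 1) k, (Nat.choose k i : ℝ) * x₀ ^ i * (1 - x₀) ^ (k - i)
    with hGdef
  have hG : x₀ < G := by
    calc x₀ < (k:ℝ) * x₀^(k-1) * (1-x₀) + x₀^k := key k hk
      _ ≤ G := S_ge_pair k j hk hj hjk (le_of_lt hx₀pos) (le_of_lt hx₀lt1)
  have hGpos : 0 < G := lt_trans hx₀pos hG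
  have hub : ∀ p ∈ S, p ≤ x₀ / G := by
    intro p hp
    by_contra hcp
    push_neg at hcp
    have hp1 : p ≤ 1 := hp.1.2
    have hpx₀ : x₀ < g k j p x₀ := by
      have : g k j p x₀ = p * G := rfl
      rw [this]
      calc x₀ = (x₀ / G) * G := by field_simp
        _ < p * G := by exact mul_lt_mul_of_pos_right hcp hGpos
    have hcont : Continuous fun x : ℝ => g k j p x - x := by
      unfold g
      exact (continuous_const.mul (continuous_finset_sum _ fun i _ =>
        ((continuous_const.mul (continuous_pow i)).mul
          ((continuous_const.sub continuous_id).pow _)))).sub continuous_id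
    have hivt := intermediate_value_Icc' (le_of_lt hx₀lt1) hcont.continuousOn
    have h0mem : (0:ℝ) ∈ Set.Icc (g k j p 1 - 1) (g k j p x₀ - x₀) := by
      constructor
      · rw [g_one_eq k j (by omega) (by omega) hjk]; linarith
      · linarith
    obtain ⟨x, hxmem, hfx⟩ := hivt h0mem
    have hxeq : g k j p x = x := by linarith [hfx, sub_eq_zero.mp hfx]
    have := hp.2 x ⟨le_trans (le_of_lt hx₀pos) hxmem.1, hxmem.2⟩ hxeq
    rw [this] at hxmem
    exact absurd hxmem.1 (not_le.mpr hx₀pos)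
  constructor
  · calc (0:ℝ) < 1/2^(k+1) := hp0pos
      _ ≤ ptilde k j := le_csSup hbdd hp0mem
  · calc ptilde k j ≤ x₀ / G := csSup_le ⟨_, hp0mem⟩ hub
      _ < 1 := (div_lt_one hGpos).mpr hG
end
end

section
/- For all integers k ≥ 3 and 2 ≤ j ≤ k-1 there exists p_0 < 1 such that for every p ∈ (p_0, 1): g_p(2p-1) > 2p-1 and g_p(p) < p, and hence g_p has a fixed point in the open interval (2p-1, p). -/
open scoped Classical

noncomputable section

lemma g_cont (k j : ℕ) (p : ℝ) : Continuous (g k j p) := by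
  unfold g; fun_prop

lemma g_upper (k j : ℕ) (hk : 3 ≤ k) (hj : 2 ≤ j) (hjk : j ≤ k - 1)
    {p : ℝ} (hp0 : 0 < p) (hp1 : p < 1) : g k j p p < p := by
  have h1 : (∑ i ∈ Finset.range (k + 1), (Nat.choose k i : ℝ) * p ^ i * (1 - p) ^ (k - i)) = 1 := by
    calc (∑ i ∈ Finset.range (k + 1), (Nat.choose k i : ℝ) * p ^ i * (1 - p) ^ (k - i))
        = ∑ i ∈ Finset.range (k + 1), p ^ i * (1 - p) ^ (k - i) * (Nat.choose k i : ℝ) :=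
          Finset.sum_congr rfl fun i _ => by ring
      _ = (p + (1 - p)) ^ k := (add_pow p (1 - p) k).symm
      _ = 1 := by norm_num
  have hS : (∑ i ∈ Finset.Icc (k - j + 1) k, (Nat.choose k i : ℝ) * p ^ i * (1 - p) ^ (k - i)) < 1 := by
    calc (∑ i ∈ Finset.Icc (k - j + 1) k, (Nat.choose k i : ℝ) * p ^ i * (1 - p) ^ (k - i))
        < ∑ i ∈ Finset.range (k + 1), (Nat.choose k i : ℝ) * p ^ i * (1 - p) ^ (k - i) := by
          refine Finset.sum_lt_sum_of_subset ?_ (i := 0) ?_ ?_ ?_ ?_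
          · intro i hi
            simp only [Finset.mem_Icc] at hi
            simp only [Finset.mem_range]; omega
          · simp
          · simp only [Finset.mem_Icc]; omega
          · have h1x : (0:ℝ) < 1 - p := by linarith
            simp only [Nat.choose_zero_right, Nat.cast_one, pow_zero, Nat.sub_zero, one_mul,
              mul_one]
            positivity
          · intro i _ _
            have h0x : (0:ℝ) ≤ p := le_of_lt hp0
            have h1x : (0:ℝ) ≤ 1 - p := by linarith
            positivity
      _ = 1 := h1
  calc g k j p p < p * 1 := mul_lt_mul_of_pos_left hS hp0
    _ = p := mul_one p

lemma g_lower (k j : ℕ) (hk : 3 ≤ k) (hj : 2 ≤ j) (hjk : j ≤ k - 1)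
    {p x : ℝ} (hp : 0 ≤ p) (hx0 : 0 ≤ x) (hx1 : x ≤ 1) :
    p * ((k : ℝ) * x ^ (k - 1) * (1 - x) + x ^ k) ≤ g k j p x := by
  have hsub : ({k - 1, k} : Finset ℕ) ⊆ Finset.Icc (k - j + 1) k := by
    intro i hi
    simp only [Finset.mem_insert, Finset.mem_singleton] at hi
    simp only [Finset.mem_Icc]; omega
  have hne : k - 1 ≠ k := by omega
  have hsum : ((k : ℝ) * x ^ (k - 1) * (1 - x) + x ^ k)
      = ∑ i ∈ ({k - 1, k} : Finset ℕ), (Nat.choose k i : ℝ) * x ^ i * (1 - x) ^ (k - i) := by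
    rw [Finset.sum_pair hne]
    have h1 : k - (k - 1) = 1 := by omega
    have h2 : k - k = 0 := by omega
    have h3 : k.choose (k - 1) = k := by
      rw [Nat.choose_symm (by omega : 1 ≤ k), Nat.choose_one_right]
    rw [h1, h2, h3, Nat.choose_self]
    push_cast; ring
  rw [hsum, g]
  apply mul_le_mul_of_nonneg_left _ hp
  apply Finset.sum_le_sum_of_subset_of_nonneg hsub
  intro i _ _
  have h1x : (0:ℝ) ≤ 1 - x := by linarith
  positivity

theorem fixed_point_near_one (k j : ℕ) (hk : 3 ≤ k) (hj : 2 ≤ j) (hjk : j ≤ k - 1) :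
    ∃ p₀ : ℝ, p₀ < 1 ∧ ∀ p ∈ Set.Ioo p₀ 1,
      2 * p - 1 < g k j p (2 * p - 1) ∧ g k j p p < p ∧
      ∃ x ∈ Set.Ioo (2 * p - 1) p, g k j p x = x := by
  obtain ⟨K, hK⟩ : ∃ K : ℝ, K = (k : ℝ) := ⟨_, rfl⟩
  have hK3 : (3 : ℝ) ≤ K := by rw [hK]; exact_mod_cast hk
  obtain ⟨C, hC⟩ : ∃ C : ℝ, C = 2 * (K - 1) * (K - 2) + 1 := ⟨_, rfl⟩
  have hC5 : (5 : ℝ) ≤ C := by rw [hC]; nlinarith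
  have hCpos : (0:ℝ) < C := by linarith
  have h2C : (0:ℝ) < 2 * C := by linarith
  refine ⟨1 - 1 / (2 * C), by nlinarith [div_pos one_pos h2C], ?_⟩
  rintro p ⟨hp₀, hp1⟩
  have hgap : 1 - p < 1 / (2 * C) := by linarith
  have h1o2C : 1 / (2 * C) ≤ 1 / 10 := by
    rw [div_le_div_iff₀ h2C (by norm_num)]; linarith
  have hp9 : (9:ℝ)/10 < p := by linarith
  have hp0 : (0:ℝ) < p := by linarith
  obtain ⟨x, hx⟩ : ∃ x : ℝ, x = 2 * p - 1 := ⟨_, rfl⟩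
  have hx0 : (0:ℝ) < x := by rw [hx]; linarith
  have hx1 : x < 1 := by rw [hx]; linarith
  obtain ⟨t, ht⟩ : ∃ t : ℝ, t = 1 - x := ⟨_, rfl⟩
  have ht0 : (0:ℝ) < t := by rw [ht]; linarith
  have htC : C * t < 1 := by
    have h2 : t = 2 * (1 - p) := by rw [ht, hx]; ring
    have h3 : C * (2 * (1 / (2 * C))) = 1 := by field_simp
    calc C * t = C * (2 * (1 - p)) := by rw [h2]
      _ < C * (2 * (1 / (2 * C))) := by
          apply mul_lt_mul_of_pos_left _ hCpos; linarith
      _ = 1 := h3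
  -- Bernoulli : x^(k-2) ≥ 1 - (K-2) t
  have hbern : 1 - (K - 2) * t ≤ x ^ (k - 2) := by
    have hb := one_add_mul_le_pow (a := -t) (by linarith) (k - 2)
    have hcast : ((k - 2 : ℕ) : ℝ) = K - 2 := by
      rw [hK]; push_cast [Nat.cast_sub (by omega : 2 ≤ k)]; ring
    rw [hcast] at hb
    calc 1 - (K - 2) * t = 1 + (K - 2) * (-t) := by ring
      _ ≤ (1 + -t) ^ (k - 2) := hb
      _ = x ^ (k - 2) := by rw [show (1 + -t) = x by rw [ht]; ring]
  -- key polynomial inequality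
  have hkey : 2 < (1 + x) * x ^ (k - 2) * (K - (K - 1) * x) := by
    have hfac : K - (K - 1) * x = 1 + (K - 1) * t := by rw [ht]; ring
    have h1x : 1 + x = 2 - t := by rw [ht]; ring
    rw [hfac, h1x]
    have hb0 : (0:ℝ) < 1 - (K - 2) * t := by nlinarith
    have hpos : (0:ℝ) < 1 + (K - 1) * t := by nlinarith
    have h2t : (0:ℝ) < 2 - t := by nlinarith
    have hexpand : (2 - t) * (1 - (K - 2) * t) * (1 + (K - 1) * t) - 2
        = t * (1 - C * t) + (K - 1) * (K - 2) * t ^ 3 := by rw [hC]; ring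
    have hterm1 : 0 < t * (1 - C * t) := mul_pos ht0 (by linarith)
    have hterm2 : 0 ≤ (K - 1) * (K - 2) * t ^ 3 :=
      mul_nonneg (mul_nonneg (by linarith : (0:ℝ) ≤ K - 1) (by linarith : (0:ℝ) ≤ K - 2))
        (by positivity : (0:ℝ) ≤ t ^ 3)
    calc (2:ℝ) < (2 - t) * (1 - (K - 2) * t) * (1 + (K - 1) * t) := by linarith
      _ ≤ (2 - t) * x ^ (k - 2) * (1 + (K - 1) * t) := by
          apply mul_le_mul_of_nonneg_right _ (le_of_lt hpos)
          exact mul_le_mul_of_nonneg_left hbern (le_of_lt h2t)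
  -- turn into inequality for g
  have hgl : x < g k j p x := by
    have hlow := g_lower k j hk hj hjk (le_of_lt hp0) (le_of_lt hx0) (le_of_lt hx1)
    rw [← hK] at hlow
    have hpx : p = (1 + x) / 2 := by rw [hx]; ring
    have e1 : x ^ (k - 1) = x ^ (k - 2) * x := by
      rw [← pow_succ]; congr 1; omega
    have e2 : x ^ k = x ^ (k - 2) * x ^ 2 := by
      rw [← pow_add]; congr 1; omega
    have hexp : p * (K * x ^ (k - 1) * (1 - x) + x ^ k)
        = (x / 2) * ((1 + x) * x ^ (k - 2) * (K - (K - 1) * x)) := by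
      rw [hpx, e1, e2]; ring
    have hmid : x < p * (K * x ^ (k - 1) * (1 - x) + x ^ k) := by
      rw [hexp]
      have := mul_lt_mul_of_pos_left hkey (by linarith : (0:ℝ) < x / 2)
      linarith
    calc x < p * (K * x ^ (k - 1) * (1 - x) + x ^ k) := hmid
      _ ≤ g k j p x := hlow
  have hgl' : 2 * p - 1 < g k j p (2 * p - 1) := by rw [← hx]; exact hgl
  refine ⟨hgl', g_upper k j hk hj hjk hp0 hp1, ?_⟩
  have hle : x ≤ p := by rw [hx]; linarith
  have hcont : ContinuousOn (fun y => g k j p y - y) (Set.Icc x p) :=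
    ((g_cont k j p).sub continuous_id).continuousOn
  have hivt := intermediate_value_Ioo' hle hcont
  have h0mem : (0:ℝ) ∈ Set.Ioo (g k j p p - p) (g k j p x - x) := by
    constructor
    · simp only [sub_neg]; exact g_upper k j hk hj hjk hp0 hp1
    · simp only [sub_pos]; exact hgl
  obtain ⟨y, hy, hy0⟩ := hivt h0mem
  rw [← hx]
  exact ⟨y, hy, by linarith [sub_eq_zero.mp hy0]⟩
end
end

section
/- Let k ≥ 2, 1 ≤ j ≤ k and p ∈ [0,1). If x = 0 is the unique fixed point of g_p in [0,1], then the sequence of iterates g_p^{∘n}(p) (g_p applied n times to the initial value p) is nonincreasing and converges to 0 as n → ∞. -/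
open scoped Classical

noncomputable section

lemma g_mem (k j : ℕ) (p x : ℝ) (hp : p ∈ Set.Ico (0:ℝ) 1) (hx : x ∈ Set.Icc (0:ℝ) 1) :
    g k j p x ∈ Set.Icc (0:ℝ) 1 := by
  obtain ⟨hp0, hp1⟩ := hp
  obtain ⟨hx0, hx1⟩ := hx
  have hterm : ∀ i ∈ Finset.Icc (k-j+1) k,
      (0:ℝ) ≤ (Nat.choose k i : ℝ) * x ^ i * (1 - x) ^ (k - i) := fun i _ =>
    mul_nonneg (mul_nonneg (Nat.cast_nonneg _) (pow_nonneg hx0 _))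
      (pow_nonneg (by linarith) _)
  have hsum0 : (0:ℝ) ≤ ∑ i ∈ Finset.Icc (k-j+1) k,
      (Nat.choose k i : ℝ) * x ^ i * (1 - x) ^ (k - i) := Finset.sum_nonneg hterm
  have hsum1 : ∑ i ∈ Finset.Icc (k-j+1) k,
      (Nat.choose k i : ℝ) * x ^ i * (1 - x) ^ (k - i) ≤ 1 := by
    have hsub : Finset.Icc (k-j+1) k ⊆ Finset.range (k+1) := by
      intro i hi
      simp only [Finset.mem_Icc] at hi
      exact Finset.mem_range.mpr (Nat.lt_succ_of_le hi.2)
    have hfull : ∑ i ∈ Finset.range (k+1),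
        (Nat.choose k i : ℝ) * x ^ i * (1 - x) ^ (k - i) = 1 := by
      have h := add_pow x (1 - x) k
      simp only [add_sub_cancel, one_pow] at h
      rw [show ∑ i ∈ Finset.range (k+1), (Nat.choose k i : ℝ) * x ^ i * (1 - x) ^ (k - i)
          = ∑ i ∈ Finset.range (k+1), x ^ i * (1 - x) ^ (k - i) * (Nat.choose k i : ℝ)
          from Finset.sum_congr rfl (fun i _ => by ring)]
      exact h.symm
    calc ∑ i ∈ Finset.Icc (k-j+1) k, (Nat.choose k i : ℝ) * x ^ i * (1 - x) ^ (k - i)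
        ≤ ∑ i ∈ Finset.range (k+1), (Nat.choose k i : ℝ) * x ^ i * (1 - x) ^ (k - i) :=
          Finset.sum_le_sum_of_subset_of_nonneg hsub (fun i hi _ =>
            mul_nonneg (mul_nonneg (Nat.cast_nonneg _) (pow_nonneg hx0 _))
              (pow_nonneg (by linarith) _))
      _ = 1 := hfull
  constructor
  · exact mul_nonneg hp0 hsum0
  · unfold g
    nlinarith

theorem iterates_antitone_tendsto_zero (k j : ℕ) (p : ℝ) (hk : 2 ≤ k) (hj1 : 1 ≤ j)
    (hjk : j ≤ k) (hp : p ∈ Set.Ico (0 : ℝ) 1)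
    (huniq : ∀ x ∈ Set.Icc (0 : ℝ) 1, g k j p x = x → x = 0) :
    Antitone (fun n : ℕ => (g k j p)^[n] p) ∧
    Filter.Tendsto (fun n : ℕ => (g k j p)^[n] p) Filter.atTop (nhds 0) := by
  obtain ⟨hp0, hp1⟩ := hp
  -- g 0 = 0
  have hg0 : g k j p 0 = 0 := by
    unfold g
    have : ∀ i ∈ Finset.Icc (k-j+1) k,
        (Nat.choose k i : ℝ) * (0:ℝ) ^ i * (1 - 0) ^ (k - i) = 0 := by
      intro i hi
      simp only [Finset.mem_Icc] at hi
      have hi1 : 1 ≤ i := le_trans (Nat.le_add_left 1 (k-j)) hi.1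
      rw [zero_pow (by omega)]
      ring
    rw [Finset.sum_congr rfl this]
    simp
  -- g x ≤ x on [0,1]
  have hle : ∀ x ∈ Set.Icc (0:ℝ) 1, g k j p x ≤ x := by
    intro x hx
    by_contra hgt
    push_neg at hgt
    have hx0 : 0 < x := by
      rcases lt_or_eq_of_le hx.1 with h | h
      · exact h
      · exfalso; rw [← h, hg0] at hgt; exact lt_irrefl 0 (by simpa using hgt)
    -- IVT on f(t) = g t - t on [x,1]
    have hcont : ContinuousOn (fun t => g k j p t - t) (Set.Icc x 1) :=
      ((g_cont k j p).sub continuous_id).continuousOn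
    have hf1 : g k j p 1 - 1 < 0 := by
      have := (g_mem k j p 1 ⟨hp0, hp1⟩ (by norm_num)).2
      have hne : g k j p 1 ≠ 1 := by
        intro heq
        have := huniq 1 (by norm_num) heq
        norm_num at this
      cases lt_or_eq_of_le this with
      | inl h => linarith
      | inr h => exact absurd h hne
    have hx1 : x ≤ 1 := hx.2
    have : (0:ℝ) ∈ Set.Icc (g k j p 1 - 1) (g k j p x - x) := ⟨by linarith, by linarith⟩
    obtain ⟨c, hc, hc0⟩ := intermediate_value_Icc' hx1 hcont this
    have hcfix : g k j p c = c := by linarith [sub_eq_zero.mp hc0]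
    have hc01 : c ∈ Set.Icc (0:ℝ) 1 := ⟨le_trans hx.1 hc.1, hc.2⟩
    have := huniq c hc01 hcfix
    rw [this] at hc
    linarith [hc.1]
  set a : ℕ → ℝ := fun n => (g k j p)^[n] p with ha
  have hmem : ∀ n, a n ∈ Set.Icc (0:ℝ) 1 := by
    intro n
    induction n with
    | zero => exact ⟨hp0, le_of_lt hp1⟩
    | succ n ih =>
        have : a (n+1) = g k j p (a n) := Function.iterate_succ_apply' _ _ _
        rw [this]
        exact g_mem k j p (a n) ⟨hp0, hp1⟩ ih
  have hanti : Antitone a := by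
    apply antitone_nat_of_succ_le
    intro n
    have : a (n+1) = g k j p (a n) := Function.iterate_succ_apply' _ _ _
    rw [this]
    exact hle (a n) (hmem n)
  refine ⟨hanti, ?_⟩
  have hbdd : BddBelow (Set.range a) := ⟨0, fun y ⟨n, hn⟩ => hn ▸ (hmem n).1⟩
  have htend : Filter.Tendsto a Filter.atTop (nhds (⨅ n, a n)) :=
    tendsto_atTop_ciInf hanti hbdd
  set L := ⨅ n, a n with hL
  have hL0 : 0 ≤ L := le_ciInf fun n => (hmem n).1
  have hL1 : L ≤ 1 := le_trans (ciInf_le hbdd 0) (hmem 0).2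
  have hfix : g k j p L = L := by
    have h1 : Filter.Tendsto (fun n => a (n+1)) Filter.atTop (nhds L) :=
      htend.comp (Filter.tendsto_add_atTop_nat 1)
    have h2 : Filter.Tendsto (fun n => g k j p (a n)) Filter.atTop (nhds (g k j p L)) :=
      ((g_cont k j p).tendsto L).comp htend
    have heq : (fun n => a (n+1)) = fun n => g k j p (a n) := by
      funext n; exact Function.iterate_succ_apply' _ _ _
    rw [heq] at h1
    exact tendsto_nhds_unique h2 h1
  have : L = 0 := huniq L ⟨hL0, hL1⟩ hfix
  rw [this] at htend
  exact htend
end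
end

section
/- Let k ≥ 2, 1 ≤ j ≤ k and p ∈ [0,1]. If x* ∈ (0,1] is a fixed point of g_p (g_p(x*) = x*), then x* ≤ p and for every n ≥ 0 the iterate g_p^{∘n}(p) satisfies g_p^{∘n}(p) ≥ x*; in particular the iterates of g_p started at p do not converge to 0. -/
open scoped Classical

noncomputable section

lemma gp_telescope (a : ℕ → ℝ) (m n : ℕ) (h : m ≤ n) :
    ∑ i ∈ Finset.Icc m n, (a (i - 1) - a i) = a (m - 1) - a n := by
  induction n, h using Nat.le_induction with
  | base => simp
  | succ n hn ih =>
      rw [Finset.sum_Icc_succ_top (le_trans hn (Nat.le_succ n)), ih]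
      simp

lemma gp_choose_id1 (k i : ℕ) (hk : 1 ≤ k) (hi : 1 ≤ i) :
    (Nat.choose k i : ℝ) * i = (k : ℝ) * Nat.choose (k - 1) (i - 1) := by
  obtain ⟨k', rfl⟩ : ∃ k', k = k' + 1 := ⟨k - 1, by omega⟩
  obtain ⟨i', rfl⟩ : ∃ i', i = i' + 1 := ⟨i - 1, by omega⟩
  have hnat : Nat.choose (k' + 1) (i' + 1) * (i' + 1) = (k' + 1) * Nat.choose k' i' :=
    (Nat.add_one_mul_choose_eq k' i').symm
  simp only [Nat.add_sub_cancel]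
  exact_mod_cast hnat

lemma gp_choose_id2 (k i : ℕ) (hk : 1 ≤ k) :
    (Nat.choose k i : ℝ) * ((k : ℝ) - i) * (if i ≤ k then 1 else 0) =
      (k : ℝ) * Nat.choose (k - 1) i * (if i ≤ k then 1 else 0) := by
  by_cases h : i ≤ k
  · simp only [if_pos h, mul_one]
    obtain ⟨k', rfl⟩ : ∃ k', k = k' + 1 := ⟨k - 1, by omega⟩
    have h1 := Nat.choose_succ_right_eq (k' + 1) i
    have h2 := Nat.add_one_mul_choose_eq k' i
    have : (k' + 1) * Nat.choose k' i = Nat.choose (k' + 1) i * (k' + 1 - i) := by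
      rw [h2, h1]
    have hcast : ((k' + 1 : ℕ) : ℝ) * Nat.choose k' i =
        (Nat.choose (k' + 1) i : ℝ) * ((k' + 1 : ℕ) - i : ℕ) := by exact_mod_cast congrArg Nat.cast this
    rw [Nat.cast_sub (by omega)] at hcast
    push_cast at hcast ⊢
    linarith
  · simp [h]

/-- Derivative of the binomial tail sum. -/
lemma gp_hasDerivAt (k m : ℕ) (hm : 1 ≤ m) (hmk : m ≤ k) (x : ℝ) :
    HasDerivAt
      (fun x : ℝ => ∑ i ∈ Finset.Icc m k, (Nat.choose k i : ℝ) * x ^ i * (1 - x) ^ (k - i))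
      ((k : ℝ) * ((Nat.choose (k - 1) (m - 1) : ℝ) * x ^ (m - 1) * (1 - x) ^ (k - m))) x := by
  have hk : 1 ≤ k := le_trans hm hmk
  set a : ℕ → ℝ := fun i => (Nat.choose (k - 1) i : ℝ) * x ^ i * (1 - x) ^ (k - 1 - i) with ha
  have term : ∀ i ∈ Finset.Icc m k,
      HasDerivAt (fun x : ℝ => (Nat.choose k i : ℝ) * x ^ i * (1 - x) ^ (k - i))
        ((k : ℝ) * (a (i - 1) - a i)) x := by
    intro i hi
    rw [Finset.mem_Icc] at hi
    have hi1 : 1 ≤ i := le_trans hm hi.1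
    have hik : i ≤ k := hi.2
    have h1 : HasDerivAt (fun x : ℝ => x ^ i) ((i : ℝ) * x ^ (i - 1)) x := hasDerivAt_pow i x
    have h2 : HasDerivAt (fun x : ℝ => (1 - x) ^ (k - i))
        (((k - i : ℕ) : ℝ) * (1 - x) ^ (k - i - 1) * (-1)) x := by
      exact (hasDerivAt_pow (k - i) (1 - x)).comp x
        (((hasDerivAt_id x).const_sub 1))
    have h3 := (h1.const_mul ((Nat.choose k i : ℝ))).fun_mul h2
    convert h3 using 1
    · rfl
    · rfl
    have e1 : k - 1 - (i - 1) = k - i := by omega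
    have e2 : k - i - 1 = k - 1 - i := by omega
    have c1 := gp_choose_id1 k i hk hi1
    have c2 := gp_choose_id2 k i hk
    rw [if_pos hik, mul_one, mul_one] at c2
    have hkicast : ((k - i : ℕ) : ℝ) = (k : ℝ) - i := by
      rw [Nat.cast_sub hik]
    rw [ha]
    simp only [e1, e2, hkicast]
    linear_combination (-(x ^ (i - 1) * (1 - x) ^ (k - i))) * c1 + (x ^ i * (1 - x) ^ (k - 1 - i)) * c2
  have hsum := HasDerivAt.fun_sum term
  have htel : ∑ i ∈ Finset.Icc m k, (k : ℝ) * (a (i - 1) - a i) =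
      (k : ℝ) * (a (m - 1) - a k) := by
    rw [← Finset.mul_sum, gp_telescope a m k hmk]
  have hak : a k = 0 := by
    simp [ha, Nat.choose_eq_zero_of_lt (by omega : k - 1 < k)]
  have ham : a (m - 1) = (Nat.choose (k - 1) (m - 1) : ℝ) * x ^ (m - 1) * (1 - x) ^ (k - m) := by
    have : k - 1 - (m - 1) = k - m := by omega
    rw [ha]; simp only [this]
  rw [htel, hak, ham, sub_zero] at hsum
  exact hsum

lemma gp_mono (k m : ℕ) (hm : 1 ≤ m) (hmk : m ≤ k) :
    MonotoneOn
      (fun x : ℝ => ∑ i ∈ Finset.Icc m k, (Nat.choose k i : ℝ) * x ^ i * (1 - x) ^ (k - i))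
      (Set.Icc 0 1) := by
  set f := fun x : ℝ => ∑ i ∈ Finset.Icc m k, (Nat.choose k i : ℝ) * x ^ i * (1 - x) ^ (k - i)
  have hd : ∀ x : ℝ, HasDerivAt f
      ((k : ℝ) * ((Nat.choose (k - 1) (m - 1) : ℝ) * x ^ (m - 1) * (1 - x) ^ (k - m))) x :=
    fun x => gp_hasDerivAt k m hm hmk x
  have hdf : Differentiable ℝ f := fun x => (hd x).differentiableAt
  apply monotoneOn_of_deriv_nonneg (convex_Icc 0 1) hdf.continuous.continuousOn
    (hdf.differentiableOn)
  intro x hx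
  rw [interior_Icc] at hx
  rw [(hd x).deriv]
  have h1 : (0 : ℝ) ≤ x := le_of_lt hx.1
  have h2 : (0 : ℝ) ≤ 1 - x := by linarith [hx.2]
  positivity

lemma gp_le_one (k m : ℕ) (x : ℝ) (hx : x ∈ Set.Icc (0 : ℝ) 1) :
    ∑ i ∈ Finset.Icc m k, (Nat.choose k i : ℝ) * x ^ i * (1 - x) ^ (k - i) ≤ 1 := by
  obtain ⟨hx0, hx1⟩ := hx
  have h1x : (0 : ℝ) ≤ 1 - x := by linarith
  have hfull : ∑ i ∈ Finset.range (k + 1), (Nat.choose k i : ℝ) * x ^ i * (1 - x) ^ (k - i) = 1 := by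
    have h := add_pow x (1 - x) k
    have : (x + (1 - x)) ^ k = 1 := by norm_num
    rw [this] at h
    have hc : ∑ i ∈ Finset.range (k + 1), (Nat.choose k i : ℝ) * x ^ i * (1 - x) ^ (k - i) =
        ∑ i ∈ Finset.range (k + 1), x ^ i * (1 - x) ^ (k - i) * (Nat.choose k i : ℝ) :=
      Finset.sum_congr rfl (fun i _ => by ring)
    rw [hc, ← h]
  calc ∑ i ∈ Finset.Icc m k, (Nat.choose k i : ℝ) * x ^ i * (1 - x) ^ (k - i)
      ≤ ∑ i ∈ Finset.range (k + 1), (Nat.choose k i : ℝ) * x ^ i * (1 - x) ^ (k - i) := by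
        apply Finset.sum_le_sum_of_subset_of_nonneg
        · intro i hi
          rw [Finset.mem_Icc] at hi
          rw [Finset.mem_range]; omega
        · intro i _ _
          positivity
    _ = 1 := hfull

lemma gp_nonneg (k m : ℕ) (x : ℝ) (hx : x ∈ Set.Icc (0 : ℝ) 1) :
    0 ≤ ∑ i ∈ Finset.Icc m k, (Nat.choose k i : ℝ) * x ^ i * (1 - x) ^ (k - i) := by
  obtain ⟨hx0, hx1⟩ := hx
  have h1x : (0 : ℝ) ≤ 1 - x := by linarith
  apply Finset.sum_nonneg
  intro i _
  positivity

theorem iterates_ge_fixed_point (k j : ℕ) (p : ℝ) (hk : 2 ≤ k) (hj1 : 1 ≤ j) (hjk : j ≤ k)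
    (hp : p ∈ Set.Icc (0 : ℝ) 1) (xs : ℝ) (hxs : xs ∈ Set.Ioc (0 : ℝ) 1)
    (hfix : g k j p xs = xs) :
    xs ≤ p ∧ (∀ n : ℕ, xs ≤ (g k j p)^[n] p) ∧
    ¬ Filter.Tendsto (fun n : ℕ => (g k j p)^[n] p) Filter.atTop (nhds 0) := by
  obtain ⟨hp0, hp1⟩ := hp
  obtain ⟨hxs0, hxs1⟩ := hxs
  set m := k - j + 1 with hm
  have hm1 : 1 ≤ m := by omega
  have hmk : m ≤ k := by omega
  -- g monotone in x on [0,1]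
  have hgmono : MonotoneOn (g k j p) (Set.Icc 0 1) := by
    intro x hx y hy hxy
    unfold g
    have := gp_mono k m hm1 hmk hx hy hxy
    exact mul_le_mul_of_nonneg_left this hp0
  have hgmem : ∀ x ∈ Set.Icc (0 : ℝ) 1, g k j p x ∈ Set.Icc (0 : ℝ) 1 := by
    intro x hx
    constructor
    · exact mul_nonneg hp0 (gp_nonneg k m x hx)
    · calc g k j p x ≤ 1 * 1 := by
            unfold g
            exact mul_le_mul hp1 (gp_le_one k m x hx) (gp_nonneg k m x hx) zero_le_one
        _ = 1 := by norm_num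
  have hxsmem : xs ∈ Set.Icc (0 : ℝ) 1 := ⟨le_of_lt hxs0, hxs1⟩
  -- xs ≤ p
  have hxsp : xs ≤ p := by
    rw [← hfix]
    unfold g
    calc p * ∑ i ∈ Finset.Icc (k - j + 1) k, (Nat.choose k i : ℝ) * xs ^ i * (1 - xs) ^ (k - i)
        ≤ p * 1 := mul_le_mul_of_nonneg_left (gp_le_one k m xs hxsmem) hp0
      _ = p := mul_one p
  -- iterates stay in [xs, 1]
  have hiter : ∀ n : ℕ, xs ≤ (g k j p)^[n] p ∧ (g k j p)^[n] p ≤ 1 := by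
    intro n
    induction n with
    | zero => exact ⟨hxsp, hp1⟩
    | succ n ih =>
        obtain ⟨ih1, ih2⟩ := ih
        have hmem : (g k j p)^[n] p ∈ Set.Icc (0 : ℝ) 1 := ⟨le_trans (le_of_lt hxs0) ih1, ih2⟩
        rw [Function.iterate_succ_apply']
        constructor
        · calc xs = g k j p xs := hfix.symm
            _ ≤ g k j p ((g k j p)^[n] p) := hgmono hxsmem hmem ih1
        · exact (hgmem _ hmem).2
  refine ⟨hxsp, fun n => (hiter n).1, ?_⟩
  intro htend
  have := htend.eventually (eventually_lt_nhds hxs0)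
  obtain ⟨n, hn⟩ := this.exists
  exact absurd (hiter n).1 (not_le.mpr hn)
end
end

section
/- Let k ≥ 2, 1 ≤ j ≤ k and p ∈ [0,1]. On the rooted k-ary tree of depth n with Bernoulli(p) product measure μ, for every n ≥ 0 the probability that the root is occupied after n iterations of the oriented bootstrap map equals the n-th iterate of g_p at p: μ({η : B̄^{∘n}(η)_r = 1}) = g_p^{∘n}(p), where r is the root. -/
open scoped Classical

noncomputable section

section Bernoulli

variable {V : Type*} [Fintype V] [DecidableEq V]

/-- Bernoulli(p) product weight of a configuration (`true` = occupied, with probability `p`). -/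
def wt (p : ℝ) (η : V → Bool) : ℝ := ∏ x : V, if η x then p else 1 - p

/-- Expectation under the Bernoulli(p) product measure μ. -/
def mean (p : ℝ) (f : (V → Bool) → ℝ) : ℝ := ∑ η : V → Bool, wt p η * f η

/-- Probability of an event under the Bernoulli(p) product measure μ. -/
def probEv (p : ℝ) (E : (V → Bool) → Prop) : ℝ := mean p (fun η => if E η then 1 else 0)

/-- Conditional expectation `μ_A(f)` of `f` given the coordinates outside `A`. -/
def cexp (p : ℝ) (A : Finset V) (f : (V → Bool) → ℝ) (η : V → Bool) : ℝ :=
  ∑ ζ : V → Bool,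
    (∏ x : V, if x ∈ A then (if ζ x then p else 1 - p) else (if ζ x = η x then 1 else 0)) * f ζ

/-- Conditional variance `Var_A(f)` on the coordinates of `A` given the remaining coordinates. -/
def cvar (p : ℝ) (A : Finset V) (f : (V → Bool) → ℝ) (η : V → Bool) : ℝ :=
  cexp p A (fun ζ => f ζ ^ 2) η - (cexp p A f η) ^ 2

/-- Variance `Var_μ(f)` under the Bernoulli(p) product measure. -/
def varTot (p : ℝ) (f : (V → Bool) → ℝ) : ℝ := mean p (fun η => f η ^ 2) - (mean p f) ^ 2

end Bernoulli

/-- Vertices of the rooted `k`-ary tree of depth `n`: words of length `≤ n` over `Fin k`. -/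
abbrev TV (k n : ℕ) := Σ m : Fin (n + 1), Fin m.val → Fin k

/-- The root: the empty word. -/
def rootT (k n : ℕ) : TV k n := ⟨⟨0, Nat.succ_pos n⟩, Fin.elim0⟩

/-- `y` is a child of `x` in the rooted tree. -/
def childOf {k n : ℕ} (x y : TV k n) : Prop :=
  ∃ h : y.1.val = x.1.val + 1, ∀ i : Fin x.1.val, y.2 (Fin.cast h.symm i.castSucc) = x.2 i

/-- The oriented bootstrap map `B̄`: a vertex becomes empty iff it is already empty or
at least `j` of its children are empty. -/
def bootO {k n : ℕ} (j : ℕ) (η : TV k n → Bool) : TV k n → Bool := fun x =>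
  if η x = false ∨ j ≤ (Finset.univ.filter fun y : TV k n => childOf x y ∧ η y = false).card
  then false else true

-- ===== generic Bernoulli lemmas =====

/-- Fubini for pi types. -/
lemma fubini {ι X : Type*} [Fintype ι] [Fintype X] [DecidableEq ι] (h : ι → X → ℝ) :
    ∑ f : ι → X, ∏ i, h i (f i) = ∏ i, ∑ x, h i x := (Fintype.prod_sum (κ := fun _ => X) h).symm

lemma sum_wt {V : Type*} [Fintype V] [DecidableEq V] (p : ℝ) : ∑ η : V → Bool, wt p η = 1 := by
  have := fubini (ι := V) (X := Bool) (fun _ b => if b then p else 1 - p)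
  simp only [wt]
  rw [this]
  simp

lemma probEv_single {V : Type*} [Fintype V] [DecidableEq V] (p : ℝ) (x0 : V) :
    probEv p (fun η : V → Bool => η x0 = true) = p := by
  set H : V → Bool → ℝ :=
    fun x b => (if b then p else 1 - p) * (if x = x0 then (if b then 1 else 0) else 1) with hH
  have key : ∀ η : V → Bool, wt p η * (if η x0 = true then (1:ℝ) else 0)
      = ∏ x : V, H x (η x) := by
    intro η
    rw [hH]
    simp only []
    rw [Finset.prod_mul_distrib]
    congr 1
    rw [Finset.prod_ite_eq' Finset.univ x0 (fun x => if η x then (1:ℝ) else 0)]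
    simp
  have step1 : probEv p (fun η : V → Bool => η x0 = true) = ∑ f : V → Bool, ∏ i, H i (f i) := by
    simp only [probEv, mean]
    refine Finset.sum_congr rfl fun η _ => ?_
    rw [← key η]
    congr 1
    by_cases h : η x0 = true <;> simp [h]
  rw [step1, fubini H]
  have : ∀ x ∈ Finset.univ, (∑ b : Bool, H x b) = if x = x0 then p else 1 := by
    intro x _
    by_cases h : x = x0 <;> simp [hH, h]
  rw [Finset.prod_congr rfl this, Finset.prod_ite_eq' Finset.univ x0 (fun _ => p)]
  simp

-- ===== tree structure =====

lemma TV.ext' {k n : ℕ} {x y : TV k n} (h : x.1.val = y.1.val)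
    (h2 : ∀ (i : ℕ) (hx : i < x.1.val) (hy : i < y.1.val), x.2 ⟨i, hx⟩ = y.2 ⟨i, hy⟩) :
    x = y := by
  obtain ⟨⟨m, hm⟩, f⟩ := x
  obtain ⟨⟨m', hm'⟩, f'⟩ := y
  simp only at h
  subst h
  simp only [Sigma.mk.inj_iff, Fin.mk.injEq, true_and, heq_eq_eq]
  funext i
  exact h2 i.val i.2 i.2

def iotaT {k n : ℕ} (c : Fin k) (x : TV k n) : TV k (n + 1) :=
  ⟨⟨x.1.val + 1, by omega⟩, Fin.cons c x.2⟩

lemma iotaT_fst {k n : ℕ} (c : Fin k) (x : TV k n) : (iotaT c x).1.val = x.1.val + 1 := rfl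

lemma iotaT_snd_zero {k n : ℕ} (c : Fin k) (x : TV k n) (h : 0 < (iotaT c x).1.val) :
    (iotaT c x).2 ⟨0, h⟩ = c := rfl

lemma iotaT_snd_succ {k n : ℕ} (c : Fin k) (x : TV k n) (i : ℕ) (h : i + 1 < (iotaT c x).1.val)
    (h' : i < x.1.val) : (iotaT c x).2 ⟨i + 1, h⟩ = x.2 ⟨i, h'⟩ := rfl

lemma rootT_fst (k n : ℕ) : (rootT k n).1.val = 0 := rfl

lemma TV.snd_congr {k n : ℕ} {x y : TV k n} (h : x = y) (i : ℕ) (hi : i < x.1.val)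
    (hi' : i < y.1.val) : x.2 ⟨i, hi⟩ = y.2 ⟨i, hi'⟩ := by subst h; rfl

lemma childOf_iff {k n : ℕ} {x y : TV k n} : childOf x y ↔ y.1.val = x.1.val + 1 ∧
    ∀ (i : ℕ) (hx : i < x.1.val) (hy : i < y.1.val), y.2 ⟨i, hy⟩ = x.2 ⟨i, hx⟩ := by
  constructor
  · rintro ⟨h, h2⟩
    refine ⟨h, fun i hx hy => ?_⟩
    exact h2 ⟨i, hx⟩
  · rintro ⟨h, h2⟩
    exact ⟨h, fun i => h2 i.val i.2 (by omega)⟩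

lemma iotaT_inj {k n : ℕ} {c c' : Fin k} {x x' : TV k n}
    (h : iotaT c x = iotaT (n := n) c' x') : c = c' ∧ x = x' := by
  have h1 : x.1.val = x'.1.val := by
    have := congrArg (fun z : TV k (n+1) => z.1.val) h
    simpa [iotaT_fst] using this
  have hl : ∀ (i : ℕ) (hi : i < (iotaT c x).1.val) (hi' : i < (iotaT c' x').1.val),
      (iotaT c x).2 ⟨i, hi⟩ = (iotaT c' x').2 ⟨i, hi'⟩ := fun i hi hi' => TV.snd_congr h i hi hi'
  constructor
  · have := hl 0 (by rw [iotaT_fst]; omega) (by rw [iotaT_fst]; omega)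
    rwa [iotaT_snd_zero, iotaT_snd_zero] at this
  · refine TV.ext' h1 (fun i hx hy => ?_)
    have := hl (i+1) (by rw [iotaT_fst]; omega) (by rw [iotaT_fst]; omega)
    rwa [iotaT_snd_succ c x i _ hx, iotaT_snd_succ c' x' i _ hy] at this

lemma iotaT_ne_root {k n : ℕ} (c : Fin k) (x : TV k n) : iotaT c x ≠ rootT k (n+1) := by
  intro h
  have : (iotaT c x).1.val = (rootT k (n+1)).1.val := by rw [h]
  simp [iotaT_fst, rootT] at this

lemma childOf_root_iff {k n : ℕ} (z : TV k (n+1)) :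
    childOf (rootT k (n+1)) z ↔ ∃ c, z = iotaT c (rootT k n) := by
  rw [childOf_iff]
  constructor
  · rintro ⟨h1, -⟩
    rw [rootT_fst] at h1
    refine ⟨z.2 ⟨0, by omega⟩, ?_⟩
    refine TV.ext' (by rw [iotaT_fst, rootT_fst, h1]) (fun i hx hy => ?_)
    rw [iotaT_fst, rootT_fst] at hy
    interval_cases i
    rw [iotaT_snd_zero]
  · rintro ⟨c, rfl⟩
    exact ⟨rfl, fun i hx hy => by rw [rootT_fst] at hx; omega⟩

def tailT {k n : ℕ} (z : TV k (n+1)) (h : 0 < z.1.val) : TV k n :=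
  ⟨⟨z.1.val - 1, by have := z.1.2; omega⟩,
    fun i => z.2 ⟨i.val + 1, by
      have h2 : i.val < z.1.val - 1 := i.2
      omega⟩⟩

lemma tailT_fst {k n : ℕ} (z : TV k (n+1)) (h : 0 < z.1.val) :
    (tailT z h).1.val = z.1.val - 1 := rfl

lemma tailT_snd {k n : ℕ} (z : TV k (n+1)) (h : 0 < z.1.val) (i : ℕ)
    (hi : i < (tailT z h).1.val) (hi' : i + 1 < z.1.val) :
    (tailT z h).2 ⟨i, hi⟩ = z.2 ⟨i + 1, hi'⟩ := rfl

lemma childOf_iotaT_iff {k n : ℕ} (c : Fin k) (x : TV k n) (z : TV k (n+1)) :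
    childOf (iotaT c x) z ↔ ∃ y, childOf x y ∧ z = iotaT c y := by
  constructor
  · intro hz
    rw [childOf_iff] at hz
    obtain ⟨h1, h2⟩ := hz
    rw [iotaT_fst] at h1
    have hz0 : 0 < z.1.val := by omega
    refine ⟨tailT z hz0, ?_, ?_⟩
    · rw [childOf_iff]
      refine ⟨by rw [tailT_fst]; omega, fun i hx hyy => ?_⟩
      rw [tailT_snd z hz0 i _ (by omega)]
      have := h2 (i+1) (by rw [iotaT_fst]; omega) (by omega)
      rw [iotaT_snd_succ c x i _ hx] at this
      exact this
    · refine TV.ext' (by rw [iotaT_fst, tailT_fst]; omega) (fun i hx hy => ?_)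
      rw [iotaT_fst, tailT_fst] at hy
      rcases i with _ | i
      · rw [iotaT_snd_zero]
        have := h2 0 (by rw [iotaT_fst]; omega) (by omega)
        rw [iotaT_snd_zero] at this
        exact this
      · rw [iotaT_snd_succ _ _ i _ (by rw [tailT_fst]; omega),
          tailT_snd z hz0 i _ (by omega)]
  · rintro ⟨y, hy, rfl⟩
    rw [childOf_iff] at hy ⊢
    obtain ⟨h1, h2⟩ := hy
    refine ⟨by rw [iotaT_fst, iotaT_fst, h1], fun i hx hy' => ?_⟩
    rw [iotaT_fst] at hx hy'
    rcases i with _ | i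
    · rw [iotaT_snd_zero, iotaT_snd_zero]
    · rw [iotaT_snd_succ c y i _ (by omega), iotaT_snd_succ c x i _ (by omega)]
      exact h2 i (by omega) (by omega)

lemma rootT_or_iotaT {k n : ℕ} (z : TV k (n+1)) :
    z = rootT k (n+1) ∨ ∃ c x, z = iotaT c x := by
  rcases Nat.eq_zero_or_pos z.1.val with h | h
  · left
    exact TV.ext' (by rw [rootT_fst, h]) (fun i hx hy => by rw [rootT_fst] at hy; omega)
  · right
    refine ⟨z.2 ⟨0, h⟩, tailT z h, ?_⟩
    refine TV.ext' (by rw [iotaT_fst, tailT_fst]; omega) (fun i hx hy => ?_)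
    rw [iotaT_fst, tailT_fst] at hy
    rcases i with _ | i
    · rw [iotaT_snd_zero]
    · rw [iotaT_snd_succ _ _ i _ (by rw [tailT_fst]; omega), tailT_snd z h i _ (by omega)]

-- ===== bootstrap lemmas =====

lemma card_children_iotaT {k n : ℕ} (c : Fin k) (x : TV k n) (η : TV k (n+1) → Bool) :
    (Finset.univ.filter fun z : TV k (n+1) => childOf (iotaT c x) z ∧ η z = false).card
      = (Finset.univ.filter fun y : TV k n => childOf x y ∧ η (iotaT c y) = false).card := by
  symm
  refine Finset.card_bij (fun y _ => iotaT c y) ?_ ?_ ?_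
  · intro y hy
    simp only [Finset.mem_filter, Finset.mem_univ, true_and] at hy ⊢
    exact ⟨(childOf_iotaT_iff c x _).2 ⟨y, hy.1, rfl⟩, hy.2⟩
  · intro y1 h1 y2 h2 h
    exact (iotaT_inj h).2
  · intro z hz
    simp only [Finset.mem_filter, Finset.mem_univ, true_and] at hz
    obtain ⟨y, hy, rfl⟩ := (childOf_iotaT_iff c x z).1 hz.1
    exact ⟨y, by simp only [Finset.mem_filter, Finset.mem_univ, true_and]; exact ⟨hy, hz.2⟩, rfl⟩

lemma bootO_iotaT {k n : ℕ} (j : ℕ) (c : Fin k) (x : TV k n) (η : TV k (n+1) → Bool) :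
    bootO j η (iotaT c x) = bootO j (fun y => η (iotaT c y)) x := by
  simp only [bootO]
  exact if_congr (or_congr Iff.rfl (by rw [card_children_iotaT])) rfl rfl

lemma boot_iter_iotaT {k n : ℕ} (j m : ℕ) (c : Fin k) (η : TV k (n+1) → Bool) :
    (fun y => (bootO j)^[m] η (iotaT c y)) = (bootO j)^[m] (fun y => η (iotaT c y)) := by
  induction m generalizing η with
  | zero => rfl
  | succ m ih =>
    rw [Function.iterate_succ_apply, Function.iterate_succ_apply]
    rw [show (bootO j fun y => η (iotaT c y)) = (fun y => bootO j η (iotaT c y)) from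
      funext fun x => (bootO_iotaT j c x η).symm]
    exact ih (bootO j η)

lemma bootO_false {k n : ℕ} {j : ℕ} {η : TV k n → Bool} {x : TV k n} (h : η x = false) :
    bootO j η x = false := by
  simp only [bootO]
  rw [if_pos (Or.inl h)]

lemma iter_false {k n : ℕ} {j : ℕ} {η : TV k n → Bool} {x : TV k n} {m m' : ℕ} (h : m ≤ m')
    (hx : (bootO j)^[m] η x = false) : (bootO j)^[m'] η x = false := by
  induction m' with
  | zero => rw [Nat.le_zero] at h; subst h; exact hx
  | succ m' ih =>
    rcases Nat.lt_or_ge m (m'+1) with h' | h'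
    · rw [Function.iterate_succ_apply']
      exact bootO_false (ih (by omega))
    · have : m = m' + 1 := by omega
      subst this; exact hx

lemma boot_succ_true_iff {k n : ℕ} (j m : ℕ) (η : TV k n → Bool) (x : TV k n) :
    (bootO j)^[m+1] η x = true ↔ (η x = true ∧
      (Finset.univ.filter fun y => childOf x y ∧ (bootO j)^[m] η y = false).card < j) := by
  rw [Function.iterate_succ_apply']
  have hsplit : bootO j ((bootO j)^[m] η) x = true ↔ ((bootO j)^[m] η x = true ∧
      (Finset.univ.filter fun y => childOf x y ∧ (bootO j)^[m] η y = false).card < j) := by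
    simp only [bootO]
    split
    · rename_i hcond
      simp only [Bool.false_eq_true, false_iff]
      rintro ⟨h1, h2⟩
      rcases hcond with h | h
      · simp [h1] at h
      · omega
    · rename_i hcond
      push_neg at hcond
      simp only [true_iff]
      exact ⟨by simpa using hcond.1, by omega⟩
  rw [hsplit]
  constructor
  · rintro ⟨h1, h2⟩
    refine ⟨?_, h2⟩
    by_contra hη
    rw [Bool.not_eq_true] at hη
    rw [iter_false (Nat.zero_le m) hη] at h1
    simp at h1
  · rintro ⟨hη, hcard⟩
    refine ⟨?_, hcard⟩
    have claim : ∀ l, l ≤ m → (bootO j)^[l] η x = true := by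
      intro l hl
      induction l with
      | zero => exact hη
      | succ l ih =>
        rw [Function.iterate_succ_apply']
        have h1 : (bootO j)^[l] η x = true := ih (by omega)
        have h2 : (Finset.univ.filter fun y => childOf x y ∧ (bootO j)^[l] η y = false).card
            ≤ (Finset.univ.filter fun y => childOf x y ∧ (bootO j)^[m] η y = false).card := by
          apply Finset.card_le_card
          intro y hy
          simp only [Finset.mem_filter, Finset.mem_univ, true_and] at hy ⊢
          exact ⟨hy.1, iter_false (by omega) hy.2⟩
        simp only [bootO]
        rw [if_neg]
        push_neg
        exact ⟨by simp [h1], by omega⟩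
    exact claim m le_rfl

lemma card_children_root {k n : ℕ} (j m : ℕ) (η : TV k (n+1) → Bool) :
    (Finset.univ.filter fun z : TV k (n+1) =>
        childOf (rootT k (n+1)) z ∧ (bootO j)^[m] η z = false).card
      = (Finset.univ.filter fun c : Fin k =>
          (bootO j)^[m] (fun y => η (iotaT c y)) (rootT k n) = false).card := by
  symm
  refine Finset.card_bij (fun c _ => iotaT c (rootT k n)) ?_ ?_ ?_
  · intro c hc
    simp only [Finset.mem_filter, Finset.mem_univ, true_and] at hc ⊢
    refine ⟨(childOf_root_iff _).2 ⟨c, rfl⟩, ?_⟩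
    rw [← congrFun (boot_iter_iotaT j m c η) (rootT k n)] at hc
    exact hc
  · intro c1 h1 c2 h2 h
    exact (iotaT_inj h).1
  · intro z hz
    simp only [Finset.mem_filter, Finset.mem_univ, true_and] at hz
    obtain ⟨c, rfl⟩ := (childOf_root_iff z).1 hz.1
    refine ⟨c, ?_, rfl⟩
    simp only [Finset.mem_filter, Finset.mem_univ, true_and]
    rw [← congrFun (boot_iter_iotaT j m c η) (rootT k n)]
    exact hz.2

lemma event_iff {k n : ℕ} (j : ℕ) (η : TV k (n+1) → Bool) :
    ((bootO j)^[n+1] η (rootT k (n+1)) = true) ↔ (η (rootT k (n+1)) = true ∧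
      (Finset.univ.filter fun c : Fin k =>
        (bootO j)^[n] (fun y => η (iotaT c y)) (rootT k n) = false).card < j) := by
  rw [boot_succ_true_iff, card_children_root]

def PhiT (k n : ℕ) : Option (Fin k × TV k n) → TV k (n+1) :=
  fun o => o.elim (rootT k (n+1)) (fun pr => iotaT pr.1 pr.2)

lemma PhiT_bij (k n : ℕ) : Function.Bijective (PhiT k n) := by
  constructor
  · rintro (_ | ⟨c, x⟩) (_ | ⟨c', x'⟩) h <;> simp only [PhiT, Option.elim] at h
    · rfl
    · exact absurd h.symm (iotaT_ne_root c' x')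
    · exact absurd h (iotaT_ne_root c x)
    · obtain ⟨h1, h2⟩ := iotaT_inj h
      rw [h1, h2]
  · intro z
    rcases rootT_or_iotaT z with h | ⟨c, x, h⟩
    · exact ⟨none, h.symm⟩
    · exact ⟨some (c, x), h.symm⟩

lemma wt_factor {k n : ℕ} (p : ℝ) (η : TV k (n+1) → Bool) :
    wt p η = (if η (rootT k (n+1)) then p else 1 - p)
      * ∏ c : Fin k, wt p (fun y => η (iotaT c y)) := by
  simp only [wt]
  rw [← Fintype.prod_bijective (PhiT k n) (PhiT_bij k n)
    (fun o => if η (PhiT k n o) then p else 1 - p) (fun z => if η z then p else 1 - p)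
    (fun o => rfl)]
  rw [Fintype.prod_option]
  congr 1
  rw [Fintype.prod_prod_type]
  rfl

def confEquiv (k n : ℕ) : (TV k (n+1) → Bool) ≃ (Bool × (Fin k → TV k n → Bool)) :=
  ((Equiv.ofBijective (PhiT k n) (PhiT_bij k n)).symm.arrowCongr (Equiv.refl Bool)).trans
    ((Equiv.piOptionEquivProd (β := fun _ => Bool)).trans
      ((Equiv.refl Bool).prodCongr (Equiv.curry _ _ _)))

lemma confEquiv_apply (k n : ℕ) (η : TV k (n+1) → Bool) :
    confEquiv k n η = (η (rootT k (n+1)), fun c y => η (iotaT c y)) := rfl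

lemma ind_and (P Q : Prop) [Decidable P] [Decidable Q] [Decidable (P ∧ Q)] :
    (if P ∧ Q then (1:ℝ) else 0) = (if P then 1 else 0) * (if Q then 1 else 0) := by
  by_cases hP : P <;> by_cases hQ : Q <;> simp [hP, hQ]

theorem oriented_bootstrap_prob (k j n : ℕ) (p : ℝ) (hk : 2 ≤ k) (hj1 : 1 ≤ j) (hjk : j ≤ k)
    (hp : p ∈ Set.Icc (0 : ℝ) 1) :
    probEv p (fun η : TV k n → Bool => (bootO j)^[n] η (rootT k n) = true)
      = (g k j p)^[n] p := by
  induction n with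
  | zero =>
    simp only [Function.iterate_zero, id_eq]
    exact probEv_single p (rootT k 0)
  | succ n ih =>
    set q := (g k j p)^[n] p with hq
    rw [Function.iterate_succ_apply']
    -- sums q and 1-q for the depth-n tree
    have hq1 : ∑ ξ : TV k n → Bool,
        wt p ξ * (if (bootO j)^[n] ξ (rootT k n) = true then (1:ℝ) else 0) = q := by
      rw [← ih]
      simp only [probEv, mean]
      refine Finset.sum_congr rfl fun ξ _ => ?_
      by_cases h : (bootO j)^[n] ξ (rootT k n) = true <;> simp [h]
    have hq0 : ∑ ξ : TV k n → Bool,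
        wt p ξ * (if (bootO j)^[n] ξ (rootT k n) = false then (1:ℝ) else 0) = 1 - q := by
      have hful : ∀ ξ : TV k n → Bool,
          wt p ξ * (if (bootO j)^[n] ξ (rootT k n) = false then (1:ℝ) else 0)
            = wt p ξ - wt p ξ * (if (bootO j)^[n] ξ (rootT k n) = true then (1:ℝ) else 0) := by
        intro ξ
        rcases Bool.eq_false_or_eq_true ((bootO j)^[n] ξ (rootT k n)) with h | h <;>
          simp [h]
      rw [Finset.sum_congr rfl fun ξ _ => hful ξ, Finset.sum_sub_distrib, sum_wt, hq1]
    -- step 1: reindex by confEquiv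
    have step1 : probEv p
        (fun η : TV k (n+1) → Bool => (bootO j)^[n+1] η (rootT k (n+1)) = true)
        = ∑ bf : Bool × (Fin k → TV k n → Bool),
            ((if bf.1 then p else 1 - p) * ∏ c, wt p (bf.2 c))
              * ((if bf.1 = true then (1:ℝ) else 0)
                * (if (Finset.univ.filter fun c : Fin k =>
                    (bootO j)^[n] (bf.2 c) (rootT k n) = false).card < j then (1:ℝ) else 0)) := by
      simp only [probEv, mean]
      refine Fintype.sum_equiv (confEquiv k n) _ _ (fun η => ?_)
      rw [confEquiv_apply]
      simp only
      have h3 := event_iff j η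
      simp only [Function.iterate_succ_apply] at h3 ⊢
      by_cases h1 : η (rootT k (n + 1)) = true <;>
        by_cases h2 : (Finset.univ.filter fun c : Fin k =>
            (bootO j)^[n] (fun y => η (iotaT c y)) (rootT k n) = false).card < j <;>
        simp [h3, h1, h2, wt_factor p η] <;> ring
    rw [step1, Fintype.sum_prod_type, Fintype.sum_bool]
    simp only [if_true, if_false, Bool.false_eq_true, mul_zero, zero_mul, Finset.sum_const_zero,
      add_zero, mul_one, one_mul]
    -- expand indicator over alive-patterns
    have pat : ∀ f : Fin k → TV k n → Bool,
        (if (Finset.filter (fun c => (bootO j)^[n] (f c) (rootT k n) = false)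
            Finset.univ).card < j then (1:ℝ) else 0)
        = ∑ A : Fin k → Bool,
            (∏ c, if (bootO j)^[n] (f c) (rootT k n) = A c then (1:ℝ) else 0)
              * (if (Finset.filter (fun c => A c = false) Finset.univ).card < j
                  then (1:ℝ) else 0) := by
      intro f
      rw [Finset.sum_eq_single (fun c => (bootO j)^[n] (f c) (rootT k n))]
      · simp
      · intro A _ hA
        have hex : ∃ c, (bootO j)^[n] (f c) (rootT k n) ≠ A c := by
          by_contra hco
          push_neg at hco
          exact hA (funext fun c => (hco c).symm)
        obtain ⟨c, hc⟩ := hex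
        exact mul_eq_zero_of_left (Finset.prod_eq_zero (Finset.mem_univ c)
          (show (if (bootO j)^[n] (f c) (rootT k n) = A c then (1:ℝ) else 0) = 0
            from if_neg hc)) _
      · intro h
        exact absurd (Finset.mem_univ _) h
    have inner : ∀ A : Fin k → Bool,
        (∑ f : Fin k → TV k n → Bool,
          ∏ c, (wt p (f c) * (if (bootO j)^[n] (f c) (rootT k n) = A c then (1:ℝ) else 0)))
          = ∏ c, (if A c then q else 1 - q) := by
      intro A
      rw [fubini (fun c ξ => wt p ξ * (if (bootO j)^[n] ξ (rootT k n) = A c then (1:ℝ) else 0))]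
      refine Finset.prod_congr rfl fun c _ => ?_
      rcases Bool.eq_false_or_eq_true (A c) with h | h <;> rw [h]
      · rw [if_pos rfl]
        exact hq1
      · rw [if_neg (by simp)]
        exact hq0
    have S2 : (∑ f : Fin k → TV k n → Bool,
        (p * ∏ c, wt p (f c)) *
          (if (Finset.filter (fun c => (bootO j)^[n] (f c) (rootT k n) = false)
            Finset.univ).card < j then (1:ℝ) else 0))
        = p * ∑ A : Fin k → Bool,
            (if (Finset.filter (fun c => A c = false) Finset.univ).card < j then (1:ℝ) else 0)
              * ∏ c, (if A c then q else 1 - q) := by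
      have : ∀ f : Fin k → TV k n → Bool,
          (p * ∏ c, wt p (f c)) *
            (if (Finset.filter (fun c => (bootO j)^[n] (f c) (rootT k n) = false)
              Finset.univ).card < j then (1:ℝ) else 0)
          = p * ∑ A : Fin k → Bool,
              (∏ c, (wt p (f c) * (if (bootO j)^[n] (f c) (rootT k n) = A c then (1:ℝ) else 0)))
                * (if (Finset.filter (fun c => A c = false) Finset.univ).card < j
                    then (1:ℝ) else 0) := by
        intro f
        rw [pat f, Finset.mul_sum, Finset.mul_sum]
        refine Finset.sum_congr rfl fun A _ => ?_
        rw [Finset.prod_mul_distrib]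
        ring
      rw [Finset.sum_congr rfl fun f _ => this f, ← Finset.mul_sum, Finset.sum_comm]
      congr 1
      refine Finset.sum_congr rfl fun A _ => ?_
      rw [← Finset.sum_mul, inner A]
      ring
    rw [S2]
    -- reindex by the set of alive children
    have hbij : Function.Bijective
        (fun A : Fin k → Bool => Finset.univ.filter fun c => A c = true) := by
      constructor
      · intro A A' h
        have h' : (Finset.univ.filter fun c => A c = true)
            = (Finset.univ.filter fun c => A' c = true) := h
        funext c
        have hmem : (c ∈ Finset.univ.filter fun c => A c = true)
            ↔ (c ∈ Finset.univ.filter fun c => A' c = true) := by rw [h']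
        simp only [Finset.mem_filter, Finset.mem_univ, true_and] at hmem
        cases hA : A c <;> cases hA' : A' c
        · rfl
        · rw [hA, hA'] at hmem; simp at hmem
        · rw [hA, hA'] at hmem; simp at hmem
        · rfl
      · intro s
        refine ⟨fun c => decide (c ∈ s), ?_⟩
        ext c
        simp
    have hAs : ∀ A : Fin k → Bool,
        (if (Finset.filter (fun c => A c = false) Finset.univ).card < j then (1:ℝ) else 0)
            * ∏ c, (if A c then q else 1 - q)
          = (fun i : ℕ => (if k - i < j then (1:ℝ) else 0) * q ^ i * (1 - q) ^ (k - i))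
              ((fun A : Fin k → Bool => Finset.univ.filter fun c => A c = true) A).card := by
      intro A
      simp only
      have hcard : (Finset.univ.filter fun c : Fin k => A c = true).card
          + (Finset.univ.filter fun c : Fin k => A c = false).card = k := by
        have := Finset.card_filter_add_card_filter_not
          (s := (Finset.univ : Finset (Fin k))) (p := fun c => A c = true)
        simpa [Bool.not_eq_true] using this
      have h1 : (Finset.univ.filter fun c : Fin k => A c = false).card
          = k - (Finset.univ.filter fun c : Fin k => A c = true).card := by omega
      rw [h1]
      have h2 : (∏ c, if A c then q else 1 - q)
          = q ^ (Finset.univ.filter fun c : Fin k => A c = true).card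
            * (1 - q) ^ (Finset.univ.filter fun c : Fin k => A c = false).card := by
        rw [Finset.prod_ite (fun _ => q) (fun _ => 1 - q), Finset.prod_const, Finset.prod_const]
        congr 2
        simp [Bool.not_eq_true]
      rw [h2, h1, mul_assoc]
    have hfinal : (∑ A : Fin k → Bool,
        (if (Finset.filter (fun c => A c = false) Finset.univ).card < j then (1:ℝ) else 0)
          * ∏ c, (if A c then q else 1 - q))
        = ∑ i ∈ Finset.Icc (k-j+1) k, (Nat.choose k i : ℝ) * q ^ i * (1 - q) ^ (k - i) := by
      rw [Fintype.sum_bijective _ hbij _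
          (fun s : Finset (Fin k) =>
            (fun i : ℕ => (if k - i < j then (1:ℝ) else 0) * q ^ i * (1 - q) ^ (k - i)) s.card)
          hAs, ← Finset.powerset_univ,
        Finset.sum_powerset_apply_card
          (fun i : ℕ => (if k - i < j then (1:ℝ) else 0) * q ^ i * (1 - q) ^ (k - i))]
      simp only [Finset.card_univ, Fintype.card_fin]
      rw [show Finset.Icc (k-j+1) k = (Finset.range (k+1)).filter (fun i => k - i < j) from by
        ext a
        simp only [Finset.mem_Icc, Finset.mem_range, Finset.mem_filter]
        omega]
      rw [Finset.sum_filter]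
      refine Finset.sum_congr rfl fun i _ => ?_
      by_cases h : k - i < j
      · simp only [h, if_true, nsmul_eq_mul]
        ring
      · simp [h]
    rw [hfinal, g, ← hq]
end
end

section
/- Let k ≥ 2, 2 ≤ j ≤ k and p ∈ [0,1). The oriented bootstrap percolation on rooted k-ary trees empties the root asymptotically almost surely if and only if g_p has no nonzero fixed point: lim_{n→∞} μ_n({η : B̄^{∘n}(η)_r = 1}) = 0 (where μ_n is the Bernoulli(p) product measure on the depth-n tree) if and only if x = 0 is the unique fixed point of g_p in [0,1]. -/
open scoped Classical

noncomputable section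

namespace BootAux

lemma nat_id1 {k i : ℕ} (hi : 1 ≤ i) (hk : 1 ≤ k) :
    k * (k-1).choose (i-1) = i * k.choose i := by
  obtain ⟨m, rfl⟩ := Nat.exists_eq_add_of_le hk
  obtain ⟨t, rfl⟩ := Nat.exists_eq_add_of_le hi
  simpa [Nat.add_comm, Nat.mul_comm] using Nat.add_one_mul_choose_eq m t

lemma nat_id2 {k i : ℕ} (hk : 1 ≤ k) :
    k * (k-1).choose i = (k - i) * k.choose i := by
  rcases Nat.lt_or_ge i k with h | h
  · have h1 : i ≤ k - 1 := by omega
    have e1 : (k-1).choose i = (k-1).choose (k-1-i) := (Nat.choose_symm h1).symm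
    have e2 : k.choose i = k.choose (k-i) := (Nat.choose_symm (le_of_lt h)).symm
    rw [e1, e2]
    have h2 : 1 ≤ k - i := by omega
    have h3 : k - 1 - i = (k - i) - 1 := by omega
    rw [h3]
    exact nat_id1 h2 hk
  · have h1 : k - 1 < i := by omega
    rw [Nat.choose_eq_zero_of_lt h1]
    have : k - i = 0 := by omega
    simp [this]

/-- Tail of the binomial distribution. -/
def tailS (k t : ℕ) (x : ℝ) : ℝ :=
  ∑ i ∈ Finset.Icc t k, (Nat.choose k i : ℝ) * x ^ i * (1 - x) ^ (k - i)

lemma g_eq (k j : ℕ) (p x : ℝ) : g k j p x = p * tailS k (k - j + 1) x := rfl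

lemma tailS_nonneg (k t : ℕ) {x : ℝ} (h0 : 0 ≤ x) (h1 : x ≤ 1) : 0 ≤ tailS k t x := by
  apply Finset.sum_nonneg
  intro i _
  have : (0:ℝ) ≤ 1 - x := by linarith
  positivity

lemma tailS_le_one (k t : ℕ) {x : ℝ} (h0 : 0 ≤ x) (h1 : x ≤ 1) : tailS k t x ≤ 1 := by
  have hx : (0:ℝ) ≤ 1 - x := by linarith
  have hsub : Finset.Icc t k ⊆ Finset.range (k+1) := by
    intro i hi
    simp only [Finset.mem_Icc] at hi
    simp only [Finset.mem_range]
    omega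
  have hle : tailS k t x ≤ ∑ i ∈ Finset.range (k+1), (Nat.choose k i : ℝ) * x ^ i * (1 - x) ^ (k - i) := by
    apply Finset.sum_le_sum_of_subset_of_nonneg hsub
    intro i _ _
    positivity
  have hbin : ∑ i ∈ Finset.range (k+1), (Nat.choose k i : ℝ) * x ^ i * (1 - x) ^ (k - i) = 1 := by
    have h2 := add_pow x (1-x) k
    simp only [add_sub_cancel, one_pow] at h2
    have h3 : ∑ i ∈ Finset.range (k+1), (Nat.choose k i : ℝ) * x ^ i * (1 - x) ^ (k - i)
        = ∑ i ∈ Finset.range (k+1), x ^ i * (1 - x) ^ (k - i) * (Nat.choose k i : ℝ) :=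
      Finset.sum_congr rfl (fun i _ => by ring)
    rw [h3, ← h2]
  linarith [hle, hbin.le, hbin.ge]

lemma tailS_zero (k t : ℕ) (ht : 1 ≤ t) : tailS k t 0 = 0 := by
  apply Finset.sum_eq_zero
  intro i hi
  simp only [Finset.mem_Icc] at hi
  have : i ≠ 0 := by omega
  simp [zero_pow this]

lemma continuous_tailS (k t : ℕ) : Continuous (tailS k t) := by
  apply continuous_finset_sum
  intro i _
  fun_prop

end BootAux

namespace BootAux

lemma hasDerivAt_tailS (k t : ℕ) (ht : 1 ≤ t) (htk : t ≤ k) (x : ℝ) :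
    HasDerivAt (tailS k t)
      ((k : ℝ) * ((k-1).choose (t-1) : ℝ) * x ^ (t-1) * (1-x) ^ (k-t)) x := by
  classical
  set d : ℕ → ℝ := fun i => (k : ℝ) * ((k-1).choose (i-1) : ℝ) * x ^ (i-1) * (1-x) ^ (k-i) with hd
  have hterm : ∀ i ∈ Finset.Icc t k,
      HasDerivAt (fun y : ℝ => (Nat.choose k i : ℝ) * y ^ i * (1 - y) ^ (k - i))
        (d i - d (i+1)) x := by
    intro i hi
    simp only [Finset.mem_Icc] at hi
    have hi1 : 1 ≤ i := le_trans ht hi.1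
    have hik : i ≤ k := hi.2
    have hk1 : 1 ≤ k := le_trans hi1 hik
    have h1 : HasDerivAt (fun y : ℝ => y ^ i) ((i:ℝ) * x ^ (i-1)) x := hasDerivAt_pow i x
    have h2 : HasDerivAt (fun y : ℝ => (1 - y) ^ (k-i))
        (((k-i : ℕ):ℝ) * (1-x) ^ (k-i-1) * (-1)) x := by
      have hb : HasDerivAt (fun y : ℝ => 1 - y) (-1) x := (hasDerivAt_id x).const_sub 1
      exact (hasDerivAt_pow (k-i) (1-x)).comp x hb
    have h3 := (h1.mul h2).const_mul (Nat.choose k i : ℝ)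
    have heq : (Nat.choose k i : ℝ) *
        ((i:ℝ) * x ^ (i-1) * (1 - x) ^ (k-i) + x ^ i * (((k-i:ℕ):ℝ) * (1-x) ^ (k-i-1) * (-1)))
        = d i - d (i+1) := by
      have e1 : (k : ℝ) * ((k-1).choose (i-1) : ℝ) = (i : ℝ) * (Nat.choose k i : ℝ) := by
        exact_mod_cast congrArg (Nat.cast : ℕ → ℝ) (nat_id1 hi1 hk1)
      have e2 : (k : ℝ) * ((k-1).choose i : ℝ) = ((k-i : ℕ) : ℝ) * (Nat.choose k i : ℝ) := by
        exact_mod_cast congrArg (Nat.cast : ℕ → ℝ) (nat_id2 hk1)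
      have e3 : (i + 1) - 1 = i := by omega
      have e4 : k - (i+1) = k - i - 1 := by omega
      simp only [hd, e3, e4]
      rw [e1, e2]
      ring
    have h4 : (fun y : ℝ => (Nat.choose k i : ℝ) * y ^ i * (1 - y) ^ (k - i))
        = (fun y : ℝ => (Nat.choose k i : ℝ) * (y ^ i * (1 - y) ^ (k - i))) := by
      funext y; ring
    rw [h4, ← heq]
    exact h3
  have hsum := HasDerivAt.fun_sum hterm
  have htel : ∑ i ∈ Finset.Icc t k, (d i - d (i+1)) = d t - d (k+1) := by
    rw [← Finset.Ico_add_one_right_eq_Icc, Finset.sum_Ico_eq_sum_range]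
    have := Finset.sum_range_sub' (fun m => d (t + m)) (k + 1 - t)
    rw [Finset.sum_congr rfl (fun m _ => by rw [show t + m + 1 = t + (m+1) by omega])]
    rw [this, show t + (k + 1 - t) = k + 1 by omega, show t + 0 = t by omega]
  have hdk1 : d (k+1) = 0 := by
    have : (k-1).choose ((k+1)-1) = 0 := by
      apply Nat.choose_eq_zero_of_lt
      omega
    simp only [hd]
    simp only [Nat.add_sub_cancel] at this ⊢
    rw [this]
    simp
  have hdt : d t = (k : ℝ) * ((k-1).choose (t-1) : ℝ) * x ^ (t-1) * (1-x) ^ (k-t) := rfl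
  rw [show (k : ℝ) * ((k-1).choose (t-1) : ℝ) * x ^ (t-1) * (1-x) ^ (k-t)
      = ∑ i ∈ Finset.Icc t k, (d i - d (i+1)) by rw [htel, hdk1, hdt, sub_zero]]
  exact hsum

lemma tailS_monotoneOn (k t : ℕ) (ht : 1 ≤ t) (htk : t ≤ k) :
    MonotoneOn (tailS k t) (Set.Icc (0:ℝ) 1) := by
  apply monotoneOn_of_deriv_nonneg (convex_Icc 0 1) (continuous_tailS k t).continuousOn
  · intro x _
    exact (hasDerivAt_tailS k t ht htk x).differentiableAt.differentiableWithinAt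
  · intro x hx
    rw [interior_Icc] at hx
    rw [(hasDerivAt_tailS k t ht htk x).deriv]
    have h1 : (0:ℝ) ≤ x := hx.1.le
    have h2 : (0:ℝ) ≤ 1 - x := by linarith [hx.2]
    positivity

end BootAux

namespace BootAux

lemma tendsto_iff_unique_fp (k j : ℕ) (p : ℝ) (hj : 1 ≤ j) (hjk : j ≤ k)
    (hp0 : 0 ≤ p) (hp1 : p < 1) (q : ℕ → ℝ) (hq0 : q 0 = p)
    (hqs : ∀ n, q (n+1) = g k j p (q n)) :
    Filter.Tendsto q Filter.atTop (nhds 0) ↔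
      ∀ x ∈ Set.Icc (0:ℝ) 1, g k j p x = x → x = 0 := by
  set t := k - j + 1 with hts
  have ht : 1 ≤ t := by omega
  have htk : t ≤ k := by omega
  have mono := tailS_monotoneOn k t ht htk
  have gmono : MonotoneOn (g k j p) (Set.Icc (0:ℝ) 1) := by
    intro x hx y hy hxy
    rw [g_eq, g_eq]
    exact mul_le_mul_of_nonneg_left (mono hx hy hxy) hp0
  have gmem : ∀ x ∈ Set.Icc (0:ℝ) 1, g k j p x ∈ Set.Icc (0:ℝ) p := by
    intro x hx
    rw [g_eq]
    constructor
    · exact mul_nonneg hp0 (tailS_nonneg k t hx.1 hx.2)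
    · calc p * tailS k t x ≤ p * 1 :=
            mul_le_mul_of_nonneg_left (tailS_le_one k t hx.1 hx.2) hp0
        _ = p := mul_one p
  have hpIcc : p ∈ Set.Icc (0:ℝ) 1 := ⟨hp0, hp1.le⟩
  have qmem : ∀ n, q n ∈ Set.Icc (0:ℝ) 1 := by
    intro n
    induction n with
    | zero => rw [hq0]; exact hpIcc
    | succ m ih =>
      rw [hqs m]
      rcases gmem (q m) ih with ⟨h1, h2⟩
      exact ⟨h1, le_trans h2 hp1.le⟩
  have gcont : Continuous (fun x : ℝ => g k j p x) := by
    have : (fun x : ℝ => g k j p x) = fun x => p * tailS k t x := by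
      funext x; rw [g_eq]
    rw [this]
    exact continuous_const.mul (continuous_tailS k t)
  constructor
  · intro htend x hx hfix
    by_contra hne
    have hxpos : 0 < x := lt_of_le_of_ne hx.1 (Ne.symm hne)
    have hle : ∀ n, x ≤ q n := by
      intro n
      induction n with
      | zero =>
        rw [hq0, ← hfix, g_eq]
        calc p * tailS k t x ≤ p * 1 :=
              mul_le_mul_of_nonneg_left (tailS_le_one k t hx.1 hx.2) hp0
          _ = p := mul_one p
      | succ m ih =>
        rw [hqs m, ← hfix]
        exact gmono hx (qmem m) ih
    have := ge_of_tendsto htend (Filter.Eventually.of_forall hle)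
    linarith
  · intro hfp
    have hant : Antitone q := by
      apply antitone_nat_of_succ_le
      intro n
      induction n with
      | zero =>
        rw [hqs 0, hq0]
        have := (gmem p hpIcc).2
        exact this
      | succ m ih =>
        rw [hqs (m+1)]
        conv_rhs => rw [hqs m]
        exact gmono (qmem (m+1)) (qmem m) ih
    have hbdd : BddBelow (Set.range q) := by
      refine ⟨0, ?_⟩
      rintro y ⟨n, rfl⟩
      exact (qmem n).1
    have htend := tendsto_atTop_ciInf hant hbdd
    set L := ⨅ n, q n with hL
    have hL0 : 0 ≤ L := le_ciInf (fun n => (qmem n).1)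
    have hL1 : L ≤ 1 := le_trans (ciInf_le hbdd 0) (qmem 0).2
    have h1 : Filter.Tendsto (fun n => q (n+1)) Filter.atTop (nhds L) :=
      htend.comp (Filter.tendsto_add_atTop_nat 1)
    have h2 : Filter.Tendsto (fun n => g k j p (q n)) Filter.atTop (nhds (g k j p L)) :=
      (gcont.tendsto L).comp htend
    have heqf : (fun n => q (n+1)) = fun n => g k j p (q n) := funext hqs
    have hgL : g k j p L = L := by
      have := tendsto_nhds_unique h1 (heqf ▸ h2)
      exact this.symm
    have : L = 0 := hfp L ⟨hL0, hL1⟩ hgL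
    rw [← this]
    exact htend

end BootAux


namespace BootAux

variable {k n : ℕ}

/-- Prepend letter `c`: embeds the depth-`n` tree as the subtree of child `c`. -/
def embed (c : Fin k) (y : TV k n) : TV k (n+1) :=
  ⟨⟨y.1.val + 1, by have := y.1.isLt; omega⟩, Fin.cons c y.2⟩

lemma embed_fst (c : Fin k) (y : TV k n) : (embed c y).1.val = y.1.val + 1 := rfl

lemma eq_root_of_fst_eq_zero (x : TV k n) (h : x.1.val = 0) : x = rootT k n := by
  obtain ⟨⟨m, hm⟩, w⟩ := x
  simp only at h
  subst h
  exact Sigma.ext rfl (heq_of_eq (funext fun i => i.elim0))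

lemma root_fst : (rootT k n).1.val = 0 := rfl

def unembed (x : TV k (n+1)) (h : x.1.val ≠ 0) : TV k n :=
  ⟨⟨x.1.val - 1, by have := x.1.isLt; omega⟩,
   fun i => x.2 ⟨i.val + 1, by have h2 : i.val < x.1.val - 1 := i.isLt; omega⟩⟩

lemma unembed_embed (c : Fin k) (y : TV k n) (h : (embed c y).1.val ≠ 0) :
    unembed (embed c y) h = y := rfl

lemma embed_snd_zero (c : Fin k) (y : TV k n) (h : 0 < (embed c y).1.val) :
    (embed c y).2 ⟨0, h⟩ = c := rfl

def split (x : TV k (n+1)) : Option (Fin k × TV k n) :=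
  if h : x.1.val = 0 then none
  else some (x.2 ⟨0, Nat.pos_of_ne_zero h⟩, unembed x h)

lemma split_root : split (rootT k (n+1)) = none := dif_pos rfl

lemma split_embed (c : Fin k) (y : TV k n) : split (embed c y) = some (c, y) := by
  have hne : (embed c y).1.val ≠ 0 := by rw [embed_fst]; omega
  unfold split
  rw [dif_neg hne]
  rfl

lemma embed_or_root (x : TV k (n+1)) :
    x = rootT k (n+1) ∨ ∃ c y, x = embed c y := by
  by_cases h : x.1.val = 0
  · exact Or.inl (eq_root_of_fst_eq_zero x h)
  · refine Or.inr ⟨x.2 ⟨0, Nat.pos_of_ne_zero h⟩, unembed x h, ?_⟩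
    obtain ⟨⟨m, hm⟩, w⟩ := x
    simp only at h
    obtain ⟨m', rfl⟩ : ∃ m', m = m' + 1 := ⟨m - 1, by omega⟩
    refine Sigma.ext rfl (heq_of_eq ?_)
    funext x
    rcases x with ⟨(_ | v), hx⟩ <;> rfl

/-- The vertex set of the depth-`(n+1)` tree is root plus `k` copies of depth-`n`. -/
def vEquiv : Option (Fin k × TV k n) ≃ TV k (n+1) where
  toFun o := o.elim (rootT k (n+1)) (fun cy => embed cy.1 cy.2)
  invFun := split
  left_inv o := by
    cases o with
    | none => exact split_root
    | some cy => exact split_embed cy.1 cy.2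
  right_inv x := by
    rcases embed_or_root x with rfl | ⟨c, y, rfl⟩
    · rw [split_root]; rfl
    · rw [split_embed]; rfl

lemma embed_injective2 {c c' : Fin k} {y y' : TV k n}
    (h : embed c y = embed c' y') : c = c' ∧ y = y' := by
  have h2 := congrArg split h
  rw [split_embed, split_embed] at h2
  simpa using h2

end BootAux


namespace BootAux

variable {k n : ℕ}

lemma childOf_root_iff (z : TV k (n+1)) :
    childOf (rootT k (n+1)) z ↔ ∃ c, z = embed c (rootT k n) := by
  constructor
  · rintro ⟨hlen, -⟩
    rcases embed_or_root z with rfl | ⟨c, y, rfl⟩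
    · exact absurd hlen (by omega)
    · refine ⟨c, ?_⟩
      have hy : y.1.val = 0 := by
        have h2 : y.1.val + 1 = 0 + 1 := hlen
        omega
      rw [eq_root_of_fst_eq_zero y hy]
  · rintro ⟨c, rfl⟩
    exact ⟨rfl, fun i => i.elim0⟩

lemma childOf_embed_iff (c : Fin k) (y : TV k n) (z : TV k (n+1)) :
    childOf (embed c y) z ↔ ∃ z', z = embed c z' ∧ childOf y z' := by
  constructor
  · rintro ⟨hlen, hpre⟩
    rcases embed_or_root z with rfl | ⟨c'', z', rfl⟩
    · have h2 : (0:ℕ) = y.1.val + 1 + 1 := hlen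
      omega
    · have hlen2 : z'.1.val + 1 = (y.1.val + 1) + 1 := hlen
      have hlen' : z'.1.val = y.1.val + 1 := by omega
      have hc : c'' = c := by
        have h0 := hpre ⟨0, by rw [embed_fst]; omega⟩
        exact h0
      subst hc
      refine ⟨z', rfl, hlen', fun i => ?_⟩
      have h1 := hpre ⟨i.val + 1, by rw [embed_fst]; have := i.isLt; omega⟩
      exact h1
  · rintro ⟨z', rfl, hlen', hpre⟩
    refine ⟨by rw [embed_fst, embed_fst, hlen'], fun i => ?_⟩
    rcases i with ⟨(_ | v), hv⟩
    · rfl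
    · have hv' : v < y.1.val := by
        have h3 : v + 1 < y.1.val + 1 := hv
        omega
      exact hpre ⟨v, hv'⟩

lemma card_children_embed (c : Fin k) (y : TV k n) (η : TV k (n+1) → Bool) :
    (Finset.univ.filter fun z : TV k (n+1) => childOf (embed c y) z ∧ η z = false).card
    = (Finset.univ.filter fun z' : TV k n => childOf y z' ∧ η (embed c z') = false).card := by
  symm
  apply Finset.card_bij (fun z' _ => embed c z')
  · intro z' hz'
    simp only [Finset.mem_filter, Finset.mem_univ, true_and] at hz' ⊢
    exact ⟨(childOf_embed_iff c y _).mpr ⟨z', rfl, hz'.1⟩, hz'.2⟩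
  · intro a _ b _ hab
    exact (embed_injective2 hab).2
  · intro z hz
    simp only [Finset.mem_filter, Finset.mem_univ, true_and] at hz
    rcases (childOf_embed_iff c y z).mp hz.1 with ⟨z', rfl, hch⟩
    refine ⟨z', ?_, rfl⟩
    simp only [Finset.mem_filter, Finset.mem_univ, true_and]
    exact ⟨hch, hz.2⟩

lemma card_children_root (ζ : TV k (n+1) → Bool) :
    (Finset.univ.filter fun z : TV k (n+1) => childOf (rootT k (n+1)) z ∧ ζ z = false).card
    = (Finset.univ.filter fun c : Fin k => ζ (embed c (rootT k n)) = false).card := by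
  symm
  apply Finset.card_bij (fun c _ => embed c (rootT k n))
  · intro c hc
    simp only [Finset.mem_filter, Finset.mem_univ, true_and] at hc ⊢
    exact ⟨(childOf_root_iff _).mpr ⟨c, rfl⟩, hc⟩
  · intro a _ b _ hab
    exact (embed_injective2 hab).1
  · intro z hz
    simp only [Finset.mem_filter, Finset.mem_univ, true_and] at hz
    rcases (childOf_root_iff z).mp hz.1 with ⟨c, rfl⟩
    refine ⟨c, ?_, rfl⟩
    simp only [Finset.mem_filter, Finset.mem_univ, true_and]
    exact hz.2

lemma bootO_cond {j : ℕ} {η : TV k n → Bool} {x : TV k n} :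
    bootO j η x = true ↔
    ¬(η x = false ∨ j ≤ (Finset.univ.filter fun y : TV k n => childOf x y ∧ η y = false).card) := by
  unfold bootO
  by_cases hc : η x = false ∨ j ≤ (Finset.univ.filter fun y : TV k n => childOf x y ∧ η y = false).card
  · simp [hc]
  · simp [hc]

lemma bootO_le {j : ℕ} {η : TV k n → Bool} {x : TV k n} (h : bootO j η x = true) :
    η x = true := by
  have := (bootO_cond.mp h)
  push_neg at this
  simpa using this.1

lemma bootO_mono {j : ℕ} {η η' : TV k n → Bool} (hle : ∀ x, η x = true → η' x = true) :
    ∀ x, bootO j η x = true → bootO j η' x = true := by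
  intro x h
  have hc := bootO_cond.mp h
  push_neg at hc
  rcases hc with ⟨h1, h2⟩
  rw [bootO_cond]
  push_neg
  constructor
  · simp only [Bool.not_eq_false] at h1 ⊢
    exact hle x h1
  · calc (Finset.univ.filter fun y : TV k n => childOf x y ∧ η' y = false).card
        ≤ (Finset.univ.filter fun y : TV k n => childOf x y ∧ η y = false).card := by
          apply Finset.card_le_card
          intro z hz
          simp only [Finset.mem_filter, Finset.mem_univ, true_and] at hz ⊢
          refine ⟨hz.1, ?_⟩
          by_contra hzz
          simp only [Bool.not_eq_false] at hzz
          have := hle z hzz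
          rw [this] at hz
          exact absurd hz.2 (by simp)
      _ < j := h2

lemma iter_le {j m : ℕ} {η : TV k n → Bool} {x : TV k n}
    (h : (bootO j)^[m] η x = true) : η x = true := by
  induction m generalizing x with
  | zero => exact h
  | succ l ih =>
    rw [Function.iterate_succ_apply'] at h
    exact ih (bootO_le h)

lemma iter_mono {j m : ℕ} {η η' : TV k n → Bool} (hle : ∀ x, η x = true → η' x = true) :
    ∀ x, (bootO j)^[m] η x = true → (bootO j)^[m] η' x = true := by
  induction m with
  | zero => exact hle
  | succ l ih =>
    intro x h
    rw [Function.iterate_succ_apply'] at h ⊢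
    exact bootO_mono ih x h

lemma iter_antitone {j m m' : ℕ} (hmm : m ≤ m') {η : TV k n → Bool} {x : TV k n}
    (h : (bootO j)^[m'] η x = true) : (bootO j)^[m] η x = true := by
  obtain ⟨d, rfl⟩ := Nat.exists_eq_add_of_le hmm
  rw [Function.iterate_add_apply] at h
  exact iter_mono (η := (bootO j)^[d] η) (η' := η) (fun z hz => iter_le hz) x h

/-- Restriction of a configuration to the subtree of child `c`. -/
def resC (c : Fin k) (η : TV k (n+1) → Bool) : TV k n → Bool := fun y => η (embed c y)

lemma resC_bootO (j : ℕ) (c : Fin k) (η : TV k (n+1) → Bool) :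
    resC c (bootO j η) = bootO j (resC c η) := by
  funext y
  show bootO j η (embed c y) = bootO j (resC c η) y
  unfold bootO
  rw [card_children_embed]
  rfl

lemma resC_iter (j m : ℕ) (c : Fin k) (η : TV k (n+1) → Bool) :
    resC c ((bootO j)^[m] η) = (bootO j)^[m] (resC c η) := by
  induction m with
  | zero => rfl
  | succ l ih =>
    rw [Function.iterate_succ_apply', Function.iterate_succ_apply', resC_bootO, ih]

lemma survival_iff (j : ℕ) (η : TV k (n+1) → Bool) :
    ((bootO j)^[n+1] η (rootT k (n+1)) = true) ↔
    (η (rootT k (n+1)) = true ∧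
     (Finset.univ.filter fun c : Fin k =>
        (bootO j)^[n] (resC c η) (rootT k n) = false).card < j) := by
  have hcard : ∀ m : ℕ,
      (Finset.univ.filter fun z : TV k (n+1) =>
        childOf (rootT k (n+1)) z ∧ (bootO j)^[m] η z = false).card
      = (Finset.univ.filter fun c : Fin k =>
        (bootO j)^[m] (resC c η) (rootT k n) = false).card := by
    intro m
    rw [card_children_root]
    apply congrArg
    apply Finset.filter_congr
    intro c _
    rw [show ((bootO j)^[m] η) (embed c (rootT k n))
        = resC c ((bootO j)^[m] η) (rootT k n) from rfl, resC_iter]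
  constructor
  · intro h
    rw [Function.iterate_succ_apply'] at h
    have hc := bootO_cond.mp h
    push_neg at hc
    rcases hc with ⟨h1, h2⟩
    simp only [Bool.not_eq_false] at h1
    refine ⟨iter_le h1, ?_⟩
    rw [← hcard n]
    exact h2
  · rintro ⟨h1, h2⟩
    have key : ∀ m, m ≤ n + 1 → (bootO j)^[m] η (rootT k (n+1)) = true := by
      intro m
      induction m with
      | zero => intro _; exact h1
      | succ l ih =>
        intro hl
        rw [Function.iterate_succ_apply']
        rw [bootO_cond]
        push_neg
        constructor
        · simp only [Bool.not_eq_false]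
          exact ih (by omega)
        · calc (Finset.univ.filter fun z : TV k (n+1) =>
                childOf (rootT k (n+1)) z ∧ (bootO j)^[l] η z = false).card
              ≤ (Finset.univ.filter fun z : TV k (n+1) =>
                childOf (rootT k (n+1)) z ∧ (bootO j)^[n] η z = false).card := by
                apply Finset.card_le_card
                intro z hz
                simp only [Finset.mem_filter, Finset.mem_univ, true_and] at hz ⊢
                refine ⟨hz.1, ?_⟩
                by_contra hzz
                simp only [Bool.not_eq_false] at hzz
                have := iter_antitone (show l ≤ n by omega) hzz
                rw [this] at hz
                exact absurd hz.2 (by simp)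
            _ < j := by rw [hcard n]; exact h2
    exact key (n+1) le_rfl

end BootAux


namespace BootAux

lemma sum_wt {V : Type*} [Fintype V] [DecidableEq V] (p : ℝ) :
    ∑ η : V → Bool, wt p η = 1 := by
  have h := Fintype.prod_sum (fun (_ : V) (b : Bool) => if b then p else (1:ℝ) - p)
  unfold wt
  rw [← h]
  have h2 : ∀ x : V, (∑ b : Bool, if b then p else (1:ℝ) - p) = 1 := by
    intro x
    rw [Fintype.sum_bool]
    simp
  calc ∏ x : V, (∑ b : Bool, if b then p else (1:ℝ) - p) = ∏ x : V, 1 :=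
        Finset.prod_congr rfl (fun x _ => h2 x)
    _ = 1 := Finset.prod_const_one

lemma probEv_eq {V : Type*} [Fintype V] [DecidableEq V] (p : ℝ) (E : (V → Bool) → Prop) :
    probEv p E = ∑ η : V → Bool, if E η then wt p η else 0 := by
  unfold probEv mean
  apply Finset.sum_congr rfl
  intro η _
  by_cases h : E η <;> simp [h]

lemma binom_count {α W : Type*} [Fintype α] [DecidableEq α] [Fintype W] [DecidableEq W]
    (w : W → ℝ) (hw : ∑ ζ, w ζ = 1) (T : W → Prop) [DecidablePred T] (I : Finset ℕ)
    (hI : ∀ i ∈ I, i ≤ Fintype.card α) (q : ℝ)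
    (hq : ∑ ζ, (if T ζ then w ζ else 0) = q) :
    ∑ fs : α → W, (∏ c, w (fs c)) *
      (if (Finset.univ.filter fun c => T (fs c)).card ∈ I then 1 else 0)
    = ∑ i ∈ I, (Nat.choose (Fintype.card α) i : ℝ) * q ^ i
        * (1 - q) ^ (Fintype.card α - i) := by
  classical
  set γ := Fintype.card α with hγ
  have step1 : ∀ fs : α → W, (∏ c, w (fs c)) *
      (if (Finset.univ.filter fun c => T (fs c)).card ∈ I then 1 else 0)
      = ∑ S : Finset α, (if S.card ∈ I then 1 else 0) *
          (if (Finset.univ.filter fun c => T (fs c)) = S then ∏ c, w (fs c) else 0) := by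
    intro fs
    have e1 : ∀ S : Finset α, (if S.card ∈ I then (1:ℝ) else 0) *
        (if (Finset.univ.filter fun c => T (fs c)) = S then ∏ c, w (fs c) else 0)
        = if (Finset.univ.filter fun c => T (fs c)) = S then
            ((if S.card ∈ I then (1:ℝ) else 0) * ∏ c, w (fs c)) else 0 := by
      intro S
      by_cases hS : (Finset.univ.filter fun c => T (fs c)) = S <;> simp [hS]
    rw [Finset.sum_congr rfl (fun S _ => e1 S),
      Finset.sum_ite_eq Finset.univ (Finset.univ.filter fun c => T (fs c))
        (fun S => (if S.card ∈ I then (1:ℝ) else 0) * ∏ c, w (fs c)),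
      if_pos (Finset.mem_univ _)]
    ring
  have step2 : ∀ S : Finset α, (∑ fs : α → W,
      if (Finset.univ.filter fun c => T (fs c)) = S then ∏ c, w (fs c) else 0)
      = q ^ S.card * (1-q) ^ (γ - S.card) := by
    intro S
    have e2 : ∀ fs : α → W,
        (if (Finset.univ.filter fun c => T (fs c)) = S then ∏ c, w (fs c) else 0)
        = ∏ c, ((if (T (fs c) ↔ c ∈ S) then 1 else 0) * w (fs c)) := by
      intro fs
      rw [Finset.prod_mul_distrib, Finset.prod_boole]
      have hiff : (Finset.univ.filter fun c => T (fs c)) = S ↔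
          ∀ c ∈ Finset.univ, (T (fs c) ↔ c ∈ S) := by
        rw [Finset.ext_iff]
        constructor
        · intro h c _
          have := h c
          simpa using this
        · intro h c
          have := h c (Finset.mem_univ c)
          simpa using this
      by_cases h : (Finset.univ.filter fun c => T (fs c)) = S
      · rw [if_pos h, if_pos (hiff.mp h), one_mul]
      · rw [if_neg h, if_neg (fun hh => h (hiff.mpr hh)), zero_mul]
    rw [Finset.sum_congr rfl (fun fs _ => e2 fs),
      ← Fintype.prod_sum (fun (c : α) (ζ : W) => (if (T ζ ↔ c ∈ S) then (1:ℝ) else 0) * w ζ)]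
    have e3 : ∀ c : α, (∑ ζ : W, (if (T ζ ↔ c ∈ S) then (1:ℝ) else 0) * w ζ)
        = if c ∈ S then q else 1 - q := by
      intro c
      by_cases hc : c ∈ S
      · rw [if_pos hc, ← hq]
        apply Finset.sum_congr rfl
        intro ζ _
        by_cases ht : T ζ <;> simp [ht, hc]
      · rw [if_neg hc]
        have h1q : (1:ℝ) - q = ∑ ζ : W, (w ζ - if T ζ then w ζ else 0) := by
          rw [Finset.sum_sub_distrib, hw, hq]
        rw [h1q]
        apply Finset.sum_congr rfl
        intro ζ _
        by_cases ht : T ζ <;> simp [ht, hc]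
    rw [Finset.prod_congr rfl (fun c _ => e3 c), ← Finset.prod_mul_prod_compl S,
      Finset.prod_congr rfl (fun c hc => if_pos hc), Finset.prod_const,
      Finset.prod_congr rfl (fun c hc => if_neg (Finset.mem_compl.mp hc)), Finset.prod_const,
      Finset.card_compl]
  rw [Finset.sum_congr rfl (fun fs _ => step1 fs), Finset.sum_comm]
  have step2' : ∀ S : Finset α, (∑ fs : α → W, (if S.card ∈ I then (1:ℝ) else 0) *
      (if (Finset.univ.filter fun c => T (fs c)) = S then ∏ c, w (fs c) else 0))
      = (if S.card ∈ I then (1:ℝ) else 0) * (q ^ S.card * (1-q) ^ (γ - S.card)) := by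
    intro S
    rw [← Finset.mul_sum, step2 S]
  rw [Finset.sum_congr rfl (fun S _ => step2' S)]
  have hps := Finset.sum_powerset_apply_card
    (fun m => (if m ∈ I then (1:ℝ) else 0) * (q ^ m * (1-q) ^ (γ - m)))
    (x := (Finset.univ : Finset α))
  rw [Finset.powerset_univ, Finset.card_univ, ← hγ] at hps
  rw [hps]
  have e4 : ∀ m ∈ Finset.range (γ+1), γ.choose m •
      ((if m ∈ I then (1:ℝ) else 0) * (q ^ m * (1-q) ^ (γ - m)))
      = if m ∈ I then (γ.choose m : ℝ) * q ^ m * (1-q) ^ (γ - m) else 0 := by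
    intro m _
    by_cases hm : m ∈ I <;> simp [hm, nsmul_eq_mul] <;> ring
  rw [Finset.sum_congr rfl e4, ← Finset.sum_filter]
  have e5 : (Finset.range (γ+1)).filter (· ∈ I) = I := by
    apply Finset.ext
    intro i
    simp only [Finset.mem_filter, Finset.mem_range]
    constructor
    · exact fun h => h.2
    · intro h
      exact ⟨by have := hI i h; omega, h⟩
  rw [e5]

end BootAux


namespace BootAux

variable {k n : ℕ}

instance uniqueTV0 : Unique (TV k 0) where
  default := rootT k 0
  uniq x := eq_root_of_fst_eq_zero x (by have := x.1.isLt; omega)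

/-- Probability that the root is still occupied after `n` rounds on the depth-`n` tree. -/
def QQ (k j : ℕ) (p : ℝ) (n : ℕ) : ℝ :=
  probEv p (fun η : TV k n → Bool => (bootO j)^[n] η (rootT k n) = true)

lemma QQ_zero (j : ℕ) (p : ℝ) : QQ k j p 0 = p := by
  unfold QQ probEv mean
  rw [← Equiv.sum_comp (Equiv.funUnique (TV k 0) Bool).symm]
  rw [Fintype.sum_bool]
  simp only [Function.iterate_zero, id_eq]
  have hval : ∀ b : Bool, (Equiv.funUnique (TV k 0) Bool).symm b = fun _ => b := fun b => rfl
  have hwt : ∀ b : Bool, wt p ((Equiv.funUnique (TV k 0) Bool).symm b)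
      = if b then p else 1 - p := by
    intro b
    rw [hval]
    unfold wt
    rw [Finset.prod_const, Finset.card_univ, Fintype.card_unique, pow_one]
  rw [hwt, hwt, hval, hval]
  simp

lemma iteIrrel {α : Sort*} {P Q : Prop} {h1 : Decidable P} {h2 : Decidable Q}
    (h : P ↔ Q) (x y : α) : (@ite _ P h1 x y) = (@ite _ Q h2 x y) := by
  cases propext h
  cases Subsingleton.elim h1 h2
  rfl

set_option maxHeartbeats 1000000 in
lemma QQ_succ (j : ℕ) (p : ℝ) (hj1 : 1 ≤ j) (hjk : j ≤ k) :
    QQ k j p (n+1) = g k j p (QQ k j p n) := by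
  classical
  -- the configuration equivalences
  set cE : ((Option (Fin k × TV k n)) → Bool) ≃ ((TV k (n+1)) → Bool) :=
    Equiv.arrowCongr vEquiv (Equiv.refl Bool) with hcEdef
  have hcE : ∀ (ζ : (Option (Fin k × TV k n)) → Bool) (o : Option (Fin k × TV k n)),
      (cE ζ) (vEquiv o) = ζ o := by
    intro ζ o
    simp [hcEdef, Equiv.arrowCongr]
  have hroot : ∀ ζ, (cE ζ) (rootT k (n+1)) = ζ none := fun ζ => hcE ζ none
  have hres : ∀ ζ (c : Fin k), resC c (cE ζ) = fun y => ζ (some (c, y)) := by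
    intro ζ c
    funext y
    exact hcE ζ (some (c, y))
  have hwt : ∀ ζ, wt p (cE ζ) =
      (if ζ none then p else 1-p) * ∏ c : Fin k, wt p (fun y => ζ (some (c, y))) := by
    intro ζ
    unfold wt
    rw [← Equiv.prod_comp vEquiv (fun x => if (cE ζ) x then p else 1-p)]
    rw [Fintype.prod_option]
    rw [hcE]
    congr 1
    rw [Fintype.prod_prod_type]
    apply Finset.prod_congr rfl
    intro c _
    apply Finset.prod_congr rfl
    intro y _
    rw [hcE]
  have hev : ∀ ζ, ((bootO j)^[n+1] (cE ζ) (rootT k (n+1)) = true) ↔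
      (ζ none = true ∧ (Finset.univ.filter fun c : Fin k =>
        (bootO j)^[n] (fun y => ζ (some (c, y))) (rootT k n) = false).card < j) := by
    intro ζ
    rw [survival_iff, hroot]
    simp only [hres]
  -- reindex the configuration sum
  have start : QQ k j p (n+1) = ∑ ζ : (Option (Fin k × TV k n)) → Bool,
      wt p (cE ζ) * (if (bootO j)^[n+1] (cE ζ) (rootT k (n+1)) = true then (1:ℝ) else 0) := by
    have h1 := (Equiv.sum_comp cE (fun η : TV k (n+1) → Bool =>
      wt p η * (if (bootO j)^[n+1] η (rootT k (n+1)) = true then (1:ℝ) else 0))).symm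
    have h2 : QQ k j p (n+1) = ∑ η : TV k (n+1) → Bool,
        wt p η * (if (bootO j)^[n+1] η (rootT k (n+1)) = true then (1:ℝ) else 0) := by
      unfold QQ probEv mean
      exact Finset.sum_congr rfl (fun η _ =>
        congrArg (wt p η * ·) (iteIrrel Iff.rfl 1 0))
    exact h2.trans h1
  rw [start]
  have hterm : ∀ ζ : (Option (Fin k × TV k n)) → Bool,
      wt p (cE ζ) * (if (bootO j)^[n+1] (cE ζ) (rootT k (n+1)) = true then (1:ℝ) else 0)
      = ((if ζ none then p else 1-p) * ∏ c : Fin k, wt p (fun y => ζ (some (c, y)))) *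
        (if (ζ none = true ∧ (Finset.univ.filter fun c : Fin k =>
          (bootO j)^[n] (fun y => ζ (some (c, y))) (rootT k n) = false).card < j)
         then (1:ℝ) else 0) := by
    intro ζ
    rw [hwt ζ]
    congr 1
    exact iteIrrel (hev ζ) 1 0
  rw [Finset.sum_congr rfl (fun ζ _ => hterm ζ)]
  set ψE : (Bool × (Fin k → TV k n → Bool)) ≃ ((Option (Fin k × TV k n)) → Bool) :=
    { toFun := fun bf o => o.elim bf.1 (fun cy => bf.2 cy.1 cy.2)
      invFun := fun ζ => (ζ none, fun c y => ζ (some (c, y)))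
      left_inv := fun bf => rfl
      right_inv := fun ζ => by funext o; cases o <;> rfl } with hψdef
  have start2 : (∑ ζ : (Option (Fin k × TV k n)) → Bool,
      ((if ζ none then p else 1-p) * ∏ c : Fin k, wt p (fun y => ζ (some (c, y)))) *
        (if (ζ none = true ∧ (Finset.univ.filter fun c : Fin k =>
          (bootO j)^[n] (fun y => ζ (some (c, y))) (rootT k n) = false).card < j)
         then (1:ℝ) else 0))
      = ∑ x : Bool × (Fin k → TV k n → Bool),
      ((if x.1 then p else 1-p) * ∏ c : Fin k, wt p (x.2 c)) *
        (if (x.1 = true ∧ (Finset.univ.filter fun c : Fin k =>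
          (bootO j)^[n] (x.2 c) (rootT k n) = false).card < j)
         then (1:ℝ) else 0) :=
    (Equiv.sum_comp ψE (fun ζ : (Option (Fin k × TV k n)) → Bool =>
      ((if ζ none then p else 1-p) * ∏ c : Fin k, wt p (fun y => ζ (some (c, y)))) *
        (if (ζ none = true ∧ (Finset.univ.filter fun c : Fin k =>
          (bootO j)^[n] (fun y => ζ (some (c, y))) (rootT k n) = false).card < j)
         then (1:ℝ) else 0))).symm
  rw [start2]
  rw [Fintype.sum_prod_type, Fintype.sum_bool]
  have h0 : (∑ fs : Fin k → TV k n → Bool,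
      ((if false then p else 1-p) * ∏ c : Fin k, wt p (fs c)) *
        (if (false = true ∧ (Finset.univ.filter fun c : Fin k =>
          (bootO j)^[n] (fs c) (rootT k n) = false).card < j)
         then (1:ℝ) else 0)) = 0 :=
    Finset.sum_eq_zero (fun fs _ => by simp)
  rw [h0, add_zero]
  have hcond : ∀ fs : Fin k → TV k n → Bool,
      ((Finset.univ.filter fun c : Fin k =>
          (bootO j)^[n] (fs c) (rootT k n) = false).card < j ↔
       (Finset.univ.filter fun c : Fin k =>
          (bootO j)^[n] (fs c) (rootT k n) = true).card ∈ Finset.Icc (k-j+1) k) := by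
    intro fs
    have hsum := Finset.card_filter_add_card_filter_not (s := Finset.univ)
      (p := fun c : Fin k => (bootO j)^[n] (fs c) (rootT k n) = true)
    simp only [Bool.not_eq_true] at hsum
    rw [Finset.card_univ, Fintype.card_fin] at hsum
    rw [Finset.mem_Icc]
    omega
  have h1 : ∀ fs : Fin k → TV k n → Bool,
      ((if true then p else 1-p) * ∏ c : Fin k, wt p (fs c)) *
        (if (true = true ∧ (Finset.univ.filter fun c : Fin k =>
          (bootO j)^[n] (fs c) (rootT k n) = false).card < j)
         then (1:ℝ) else 0)
      = p * ((∏ c : Fin k, wt p (fs c)) *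
        (if (Finset.univ.filter fun c : Fin k =>
          (bootO j)^[n] (fs c) (rootT k n) = true).card ∈ Finset.Icc (k-j+1) k
         then (1:ℝ) else 0)) := by
    intro fs
    have htt : (if (true = true) then p else 1-p) = p := if_pos rfl
    by_cases hcd : (Finset.univ.filter fun c : Fin k =>
        (bootO j)^[n] (fs c) (rootT k n) = false).card < j
    · rw [htt, if_pos (⟨rfl, hcd⟩ : true = true ∧ _), if_pos ((hcond fs).mp hcd)]
      ring
    · rw [htt, if_neg (fun hh : true = true ∧ _ => hcd hh.2),
        if_neg (fun hh => hcd ((hcond fs).mpr hh))]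
      ring
  rw [Finset.sum_congr rfl (fun fs _ => h1 fs), ← Finset.mul_sum]
  have hq : (∑ ζ : TV k n → Bool,
      if (bootO j)^[n] ζ (rootT k n) = true then wt p ζ else 0) = QQ k j p n := by
    rw [QQ, probEv_eq]
    exact Finset.sum_congr rfl (fun ζ _ => iteIrrel Iff.rfl _ _)
  have hbc := binom_count (α := Fin k) (W := TV k n → Bool) (wt p) (sum_wt p)
    (fun ζ : TV k n → Bool => (bootO j)^[n] ζ (rootT k n) = true)
    (Finset.Icc (k-j+1) k)
    (by intro i hi; rw [Fintype.card_fin]; exact (Finset.mem_Icc.mp hi).2)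
    (QQ k j p n) hq
  rw [Fintype.card_fin] at hbc
  rw [hbc]
  rfl

end BootAux


theorem oriented_bootstrap_empties_iff (k j : ℕ) (p : ℝ) (hk : 2 ≤ k) (hj : 2 ≤ j)
    (hjk : j ≤ k) (hp : p ∈ Set.Ico (0 : ℝ) 1) :
    Filter.Tendsto
        (fun n : ℕ => probEv p (fun η : TV k n → Bool => (bootO j)^[n] η (rootT k n) = true))
        Filter.atTop (nhds 0)
      ↔ ∀ x ∈ Set.Icc (0 : ℝ) 1, g k j p x = x → x = 0 := by
  have hiff := BootAux.tendsto_iff_unique_fp k j p (by omega) hjk hp.1 hp.2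
    (BootAux.QQ k j p) (BootAux.QQ_zero j p)
    (fun n => BootAux.QQ_succ (k := k) (n := n) j p (by omega) hjk)
  exact hiff
end
end

section
/- For all integers k ≥ 3 and 2 ≤ j ≤ k-1, at the critical parameter p̃ the map g_{p̃} still possesses a nonzero fixed point: there exists x ∈ (0,1] with g_{p̃}(x) = x. (That is, the bootstrap percolation transition is discontinuous when 2 ≤ j ≤ k-1.) -/
open scoped Classical

noncomputable section

theorem discontinuous_transition (k j : ℕ) (hk : 3 ≤ k) (hj : 2 ≤ j) (hjk : j ≤ k - 1) :
    ∃ x ∈ Set.Ioc (0 : ℝ) 1, g k j (ptilde k j) x = x := by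
  classical
  set F : ℝ → ℝ := fun x => ∑ i ∈ Finset.Icc (k - j + 1) k,
    (Nat.choose k i : ℝ) * x ^ i * (1 - x) ^ (k - i) with hFdef
  have hgF : ∀ p x : ℝ, g k j p x = p * F x := fun _ _ => rfl
  have hkmem : k ∈ Finset.Icc (k - j + 1) k := by
    simp only [Finset.mem_Icc]
    omega
  have hFcont : Continuous F := by
    apply continuous_finset_sum
    intro i _
    fun_prop
  have hFpos : ∀ x : ℝ, 0 < x → x ≤ 1 → 0 < F x := by
    intro x hx hx1
    have hterm : 0 < (Nat.choose k k : ℝ) * x ^ k * (1 - x) ^ (k - k) := by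
      simp only [Nat.choose_self, Nat.cast_one, Nat.sub_self, pow_zero, one_mul, mul_one]
      positivity
    refine Finset.sum_pos' ?_ ⟨k, hkmem, hterm⟩
    intro i _
    have h1x : (0:ℝ) ≤ 1 - x := by linarith
    positivity
  have hF1 : F 1 = 1 := by
    rw [hFdef]
    simp only
    rw [Finset.sum_eq_single k]
    · simp
    · intro i hi hik
      have hki : k - i ≠ 0 := by
        simp only [Finset.mem_Icc] at hi; omega
      simp [hki]
    · intro h; exact absurd hkmem h
  have hFle : ∀ x : ℝ, 0 ≤ x → x ≤ 1 → F x ≤ 2 ^ k * x ^ 2 := by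
    intro x hx hx1
    have h1x : (0:ℝ) ≤ 1 - x := by linarith
    calc F x ≤ ∑ i ∈ Finset.Icc (k - j + 1) k, (Nat.choose k i : ℝ) * x ^ 2 := by
          apply Finset.sum_le_sum
          intro i hi
          have hi2 : 2 ≤ i := by simp only [Finset.mem_Icc] at hi; omega
          have hxi : x ^ i ≤ x ^ 2 := pow_le_pow_of_le_one hx hx1 hi2
          have h1xi : (1 - x) ^ (k - i) ≤ 1 := pow_le_one₀ h1x (by linarith)
          have hc : (0:ℝ) ≤ (Nat.choose k i : ℝ) := Nat.cast_nonneg _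
          calc (Nat.choose k i : ℝ) * x ^ i * (1 - x) ^ (k - i)
              ≤ (Nat.choose k i : ℝ) * x ^ i * 1 := by
                apply mul_le_mul_of_nonneg_left h1xi
                positivity
            _ = (Nat.choose k i : ℝ) * x ^ i := by ring
            _ ≤ (Nat.choose k i : ℝ) * x ^ 2 := mul_le_mul_of_nonneg_left hxi hc
      _ = (∑ i ∈ Finset.Icc (k - j + 1) k, (Nat.choose k i : ℝ)) * x ^ 2 := by
          rw [Finset.sum_mul]
      _ ≤ 2 ^ k * x ^ 2 := by
          apply mul_le_mul_of_nonneg_right _ (sq_nonneg x)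
          calc ∑ i ∈ Finset.Icc (k - j + 1) k, (Nat.choose k i : ℝ)
              ≤ ∑ i ∈ Finset.range (k+1), (Nat.choose k i : ℝ) := by
                apply Finset.sum_le_sum_of_subset_of_nonneg
                · intro i hi
                  simp only [Finset.mem_Icc] at hi
                  simp only [Finset.mem_range]
                  omega
                · intros; positivity
            _ = 2 ^ k := by
                rw [← Nat.cast_sum]
                norm_cast
                exact Nat.sum_range_choose k
  -- the cutoff δ below which h(x) = x / F x is at least 2
  set δ : ℝ := 1 / 2 ^ (k+1) with hδdef
  have hδpos : 0 < δ := by positivity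
  have hδ1 : δ ≤ 1 := by
    rw [hδdef, div_le_one (by positivity)]
    exact one_le_pow₀ one_le_two
  have hδeq : 2 * 2 ^ k * δ = 1 := by
    rw [hδdef]
    rw [mul_one_div, div_eq_one_iff_eq (by positivity)]
    ring
  have hhige : ∀ x : ℝ, 0 < x → x ≤ δ → 2 ≤ x / F x := by
    intro x hx hxδ
    have hx1 : x ≤ 1 := le_trans hxδ hδ1
    have hFx : 0 < F x := hFpos x hx hx1
    have hFb := hFle x hx.le hx1
    have hxx : x * x ≤ δ * x := mul_le_mul_of_nonneg_right hxδ hx.le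
    rw [le_div_iff₀ hFx]
    nlinarith [pow_pos (show (0:ℝ) < 2 by norm_num) k]
  -- minimum of h on [δ, 1]
  have hcont : ContinuousOn (fun x : ℝ => x / F x) (Set.Icc δ 1) := by
    apply ContinuousOn.div continuousOn_id hFcont.continuousOn
    intro x hx
    exact (hFpos x (lt_of_lt_of_le hδpos hx.1) hx.2).ne'
  obtain ⟨x₀, hx₀K, hmin⟩ := (isCompact_Icc).exists_isMinOn
    ⟨δ, Set.mem_Icc.mpr ⟨le_rfl, hδ1⟩⟩ hcont
  have hmin' : ∀ x ∈ Set.Icc δ 1, x₀ / F x₀ ≤ x / F x := fun x hx => hmin hx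
  set m : ℝ := x₀ / F x₀ with hmdef
  have hx₀pos : 0 < x₀ := lt_of_lt_of_le hδpos hx₀K.1
  have hFx₀ : 0 < F x₀ := hFpos x₀ hx₀pos hx₀K.2
  have hmpos : 0 < m := div_pos hx₀pos hFx₀
  have hm1 : m ≤ 1 := by
    have := hmin' 1 (Set.mem_Icc.mpr ⟨hδ1, le_rfl⟩)
    rwa [hF1, div_one] at this
  have hglob : ∀ x : ℝ, 0 < x → x ≤ 1 → m ≤ x / F x := by
    intro x hx hx1
    rcases le_or_gt δ x with hcase | hcase
    · exact hmin' x (Set.mem_Icc.mpr ⟨hcase, hx1⟩)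
    · have := hhige x hx hcase.le
      linarith
  set S := {p : ℝ | p ∈ Set.Icc (0 : ℝ) 1 ∧ ∀ x ∈ Set.Icc (0 : ℝ) 1, g k j p x = x → x = 0}
    with hSdef
  have hpt : ptilde k j = sSup S := rfl
  have h0S : (0:ℝ) ∈ S := by
    refine ⟨⟨le_rfl, zero_le_one⟩, ?_⟩
    intro x hx hgx
    rw [hgF] at hgx
    simpa using hgx.symm
  have hub : ∀ p ∈ S, p ≤ m := by
    intro p hp
    by_contra hpm
    push_neg at hpm
    have hp1 : p ≤ 1 := hp.1.2
    have hδx₀ : δ ≤ x₀ := hx₀K.1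
    have hIVT := intermediate_value_Icc' hδx₀
      (hcont.mono (Set.Icc_subset_Icc le_rfl hx₀K.2))
    have hpmem : p ∈ Set.Icc ((fun x : ℝ => x / F x) x₀) ((fun x : ℝ => x / F x) δ) := by
      constructor
      · exact hpm.le
      · have := hhige δ hδpos le_rfl
        simp only
        linarith
    obtain ⟨x, hxI, hxp⟩ := hIVT hpmem
    have hxpos : 0 < x := lt_of_lt_of_le hδpos hxI.1
    have hx1 : x ≤ 1 := le_trans hxI.2 hx₀K.2
    have hFx : 0 < F x := hFpos x hxpos hx1
    have hfix : g k j p x = x := by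
      rw [hgF, ← hxp, div_mul_cancel₀ _ hFx.ne']
    exact hxpos.ne' (hp.2 x ⟨hxpos.le, hx1⟩ hfix)
  have hsub : Set.Ico (0:ℝ) m ⊆ S := by
    intro p hp
    refine ⟨⟨hp.1, le_trans hp.2.le hm1⟩, ?_⟩
    intro x hx hgx
    by_contra hxne
    have hxpos : 0 < x := lt_of_le_of_ne hx.1 (Ne.symm hxne)
    have hFx : 0 < F x := hFpos x hxpos hx.2
    rw [hgF] at hgx
    have hpx : p = x / F x := by
      rw [eq_div_iff hFx.ne']
      exact hgx
    have := hglob x hxpos hx.2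
    rw [← hpx] at this
    exact absurd hp.2 (not_lt.mpr this)
  have hptilde : ptilde k j = m := by
    rw [hpt]
    apply le_antisymm
    · exact csSup_le ⟨0, h0S⟩ hub
    · calc m = sSup (Set.Ico (0:ℝ) m) := (csSup_Ico hmpos).symm
        _ ≤ sSup S := csSup_le_csSup ⟨m, hub⟩ ⟨0, le_rfl, hmpos⟩ hsub
  refine ⟨x₀, ⟨hx₀pos, hx₀K.2⟩, ?_⟩
  rw [hptilde, hgF, hmdef, div_mul_cancel₀ _ hFx₀.ne']
end
end

section
/- Let k ≥ 1, n ≥ 0 and p ∈ (0,1). On the rooted k-ary tree of depth n with Bernoulli(p) product measure μ, every function f : Ω_n → ℝ satisfies Var_μ(f) ≤ ∑_{x ∈ V_n} μ( Var_x( μ_{T̂_x}(f) ) ), where T̂_x is the set of strict descendants of x (the subtree rooted at x with x removed), μ_{T̂_x}(f) is the conditional expectation of f given the coordinates outside T̂_x, and Var_x denotes the conditional variance in the coordinate η_x given all other coordinates. -/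
open scoped Classical

noncomputable section

/-- `y` is a strict descendant of `x` in the rooted tree. -/
def strictDescOf {k n : ℕ} (x y : TV k n) : Prop :=
  ∃ h : x.1.val < y.1.val, ∀ i : Fin x.1.val, y.2 ⟨i.val, i.2.trans h⟩ = x.2 i

/-- `T̂_x`: the set of strict descendants of `x` (the subtree rooted at `x`, with `x` removed). -/
def descSet {k n : ℕ} (x : TV k n) : Finset (TV k n) :=
  Finset.univ.filter (strictDescOf x)

namespace TreeVarAux

open Finset

variable {V : Type*} [Fintype V] [DecidableEq V] {p : ℝ}

/-- The conditional-expectation weight kernel. -/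
def W (p : ℝ) (A : Finset V) (η ζ : V → Bool) : ℝ :=
  ∏ x : V, if x ∈ A then (if ζ x then p else 1 - p) else (if ζ x = η x then 1 else 0)

lemma cexp_def (p : ℝ) (A : Finset V) (f : (V → Bool) → ℝ) (η : V → Bool) :
    cexp p A f η = ∑ ζ : V → Bool, W p A η ζ * f ζ := rfl

lemma W_nonneg (hp0 : 0 ≤ p) (hp1 : p ≤ 1) (A : Finset V) (η ζ : V → Bool) :
    0 ≤ W p A η ζ :=
  Finset.prod_nonneg fun x _ => by split_ifs <;> linarith

lemma W_eq_zero (A : Finset V) (η ζ : V → Bool) (x : V) (hx : x ∉ A) (hne : ζ x ≠ η x) :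
    W p A η ζ = 0 :=
  Finset.prod_eq_zero (Finset.mem_univ x) (by simp [hx, hne])

lemma W_sum_one (A : Finset V) (η : V → Bool) : ∑ ζ : V → Bool, W p A η ζ = 1 := by
  unfold W
  rw [← Fintype.prod_sum
    (fun (x : V) (c : Bool) => if x ∈ A then (if c then p else 1 - p) else (if c = η x then 1 else 0))]
  refine Finset.prod_eq_one fun x _ => ?_
  rw [Fintype.sum_bool]
  by_cases hA : x ∈ A
  · simp [hA]
  · cases h : η x <;> simp [hA, h]

lemma W_mul (A B : Finset V) (η ξ : V → Bool) :
    ∑ ζ : V → Bool, W p A η ζ * W p B ζ ξ = W p (A ∪ B) η ξ := by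
  unfold W
  simp only [← Finset.prod_mul_distrib]
  rw [← Fintype.prod_sum (fun (x : V) (c : Bool) =>
    (if x ∈ A then (if c then p else 1 - p) else (if c = η x then 1 else 0)) *
    (if x ∈ B then (if ξ x then p else 1 - p) else (if ξ x = c then 1 else 0)))]
  refine Finset.prod_congr rfl fun x _ => ?_
  rw [Fintype.sum_bool]
  by_cases hA : x ∈ A <;> by_cases hB : x ∈ B <;>
    cases hxi : ξ x <;> cases heta : η x <;>
    simp [hA, hB, hxi, heta] <;> ring

lemma cexp_cexp (A B : Finset V) (f : (V → Bool) → ℝ) (η : V → Bool) :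
    cexp p A (cexp p B f) η = cexp p (A ∪ B) f η := by
  simp only [cexp_def, Finset.mul_sum]
  rw [Finset.sum_comm]
  refine Finset.sum_congr rfl fun ξ _ => ?_
  rw [← W_mul A B η ξ, Finset.sum_mul]
  exact Finset.sum_congr rfl fun ζ _ => by ring

lemma cexp_univ (f : (V → Bool) → ℝ) (η : V → Bool) :
    cexp p (Finset.univ : Finset V) f η = mean p f := by
  unfold cexp mean wt
  simp

lemma cexp_empty (f : (V → Bool) → ℝ) (η : V → Bool) :
    cexp p (∅ : Finset V) f η = f η := by
  rw [cexp_def, Finset.sum_eq_single η]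
  · rw [show W p (∅ : Finset V) η η = 1 from Finset.prod_eq_one fun x _ => by simp, one_mul]
  · intro ζ _ hne
    obtain ⟨x, hx⟩ : ∃ x, ζ x ≠ η x := by
      by_contra h; push_neg at h; exact hne (funext h)
    rw [W_eq_zero ∅ η ζ x (Finset.notMem_empty x) hx, zero_mul]
  · intro h; exact absurd (Finset.mem_univ η) h

lemma mean_cexp (A : Finset V) (f : (V → Bool) → ℝ) :
    mean p (cexp p A f) = mean p f := by
  rw [← cexp_univ (p := p) (cexp p A f) (fun _ => false), cexp_cexp,
    show (Finset.univ ∪ A : Finset V) = Finset.univ from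
      Finset.union_eq_left.2 (Finset.subset_univ A), cexp_univ]

lemma mean_sub (f g : (V → Bool) → ℝ) :
    mean p (fun η => f η - g η) = mean p f - mean p g := by
  unfold mean; rw [← Finset.sum_sub_distrib]
  exact Finset.sum_congr rfl fun η _ => by ring

lemma mean_const (c : ℝ) : mean p (fun _ : V → Bool => c) = c := by
  have h := W_sum_one (p := p) (Finset.univ : Finset V) (fun _ => false)
  unfold mean
  have hwt : ∀ ζ : V → Bool, wt p ζ = W p (Finset.univ : Finset V) (fun _ => false) ζ := by
    intro ζ; unfold wt W; simp
  calc ∑ η : V → Bool, wt p η * c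
      = (∑ η : V → Bool, W p (Finset.univ : Finset V) (fun _ => false) η) * c := by
        rw [Finset.sum_mul]; exact Finset.sum_congr rfl fun η _ => by rw [hwt]
    _ = c := by rw [h, one_mul]

lemma mean_mono (hp0 : 0 ≤ p) (hp1 : p ≤ 1) {f g : (V → Bool) → ℝ}
    (h : ∀ η, f η ≤ g η) : mean p f ≤ mean p g := by
  refine Finset.sum_le_sum fun η _ => ?_
  have hw : 0 ≤ wt p η := Finset.prod_nonneg fun x _ => by split_ifs <;> linarith
  exact mul_le_mul_of_nonneg_left (h η) hw

lemma jensen (hp0 : 0 ≤ p) (hp1 : p ≤ 1) (A : Finset V) (f : (V → Bool) → ℝ) (η : V → Bool) :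
    (cexp p A f η) ^ 2 ≤ cexp p A (fun ζ => f ζ ^ 2) η := by
  have := Finset.sum_sq_le_sum_mul_sum_of_sq_eq_mul (Finset.univ : Finset (V → Bool))
    (r := fun ζ => W p A η ζ * f ζ) (f := fun ζ => W p A η ζ)
    (g := fun ζ => W p A η ζ * f ζ ^ 2)
    (fun ζ _ => W_nonneg hp0 hp1 A η ζ)
    (fun ζ _ => mul_nonneg (W_nonneg hp0 hp1 A η ζ) (sq_nonneg _))
    (fun ζ _ => by ring)
  rw [W_sum_one A η, one_mul] at this
  exact this

lemma cexp_sub (A : Finset V) (f g : (V → Bool) → ℝ) (η : V → Bool) :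
    cexp p A (fun ζ => f ζ - g ζ) η = cexp p A f η - cexp p A g η := by
  unfold cexp; rw [← Finset.sum_sub_distrib]
  exact Finset.sum_congr rfl fun ζ _ => by ring

lemma cexp_offA (A : Finset V) (f : (V → Bool) → ℝ) {ζ η : V → Bool}
    (h : ∀ x ∉ A, ζ x = η x) : cexp p A f ζ = cexp p A f η := by
  simp only [cexp_def]
  refine Finset.sum_congr rfl fun ξ _ => ?_
  congr 1
  refine Finset.prod_congr rfl fun x _ => ?_
  by_cases hx : x ∈ A
  · simp [hx]
  · simp [hx, h x hx]

lemma cexp_pull (A : Finset V) (f m : (V → Bool) → ℝ) (η : V → Bool)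
    (hm : ∀ ζ, (∀ x ∉ A, ζ x = η x) → m ζ = m η) :
    cexp p A (fun ζ => f ζ * m ζ) η = cexp p A f η * m η := by
  simp only [cexp_def, Finset.sum_mul]
  refine Finset.sum_congr rfl fun ζ _ => ?_
  by_cases h : ∀ x ∉ A, ζ x = η x
  · rw [hm ζ h]; ring
  · push_neg at h
    obtain ⟨x, hx, hne⟩ := h
    rw [W_eq_zero A η ζ x hx hne]; ring

lemma mean_cvar (A : Finset V) (h : (V → Bool) → ℝ) :
    mean p (cvar p A h) = mean p (fun η => h η ^ 2) - mean p (fun η => (cexp p A h η) ^ 2) := by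
  unfold cvar
  rw [mean_sub (f := fun η => cexp p A (fun ζ => h ζ ^ 2) η) (g := fun η => (cexp p A h η) ^ 2)]
  rw [show (fun η => cexp p A (fun ζ => h ζ ^ 2) η) = cexp p A (fun ζ => h ζ ^ 2) from rfl,
    mean_cexp]

lemma mean_proj (A : Finset V) (h : (V → Bool) → ℝ) :
    mean p (cvar p A h) = mean p (fun η => (h η - cexp p A h η) ^ 2) := by
  have hpull : ∀ η, cexp p A (fun ζ => h ζ * cexp p A h ζ) η
      = cexp p A h η * cexp p A h η := fun η =>
    cexp_pull A h (cexp p A h) η (fun ζ hζ => cexp_offA A h hζ)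
  have h1 : mean p (fun η => h η * cexp p A h η)
      = mean p (fun η => (cexp p A h η) ^ 2) := by
    rw [← mean_cexp A (fun η => h η * cexp p A h η)]
    have hfe : cexp p A (fun η => h η * cexp p A h η) = fun η => (cexp p A h η) ^ 2 :=
      funext fun η => by rw [hpull η]; ring
    rw [hfe]
  have expand : mean p (fun η => (h η - cexp p A h η) ^ 2)
      = mean p (fun η => h η ^ 2) - 2 * mean p (fun η => h η * cexp p A h η)
        + mean p (fun η => (cexp p A h η) ^ 2) := by
    unfold mean
    rw [Finset.mul_sum, ← Finset.sum_sub_distrib, ← Finset.sum_add_distrib]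
    refine Finset.sum_congr rfl fun η _ => ?_
    beta_reduce
    ring
  rw [mean_cvar, expand, h1]; ring

lemma contract (hp0 : 0 ≤ p) (hp1 : p ≤ 1) (x : V) (C : Finset V) (g : (V → Bool) → ℝ) :
    mean p (cvar p {x} (cexp p C g)) ≤ mean p (cvar p {x} g) := by
  rw [mean_proj, mean_proj]
  have h2 : ∀ η, cexp p C g η - cexp p {x} (cexp p C g) η
      = cexp p C (fun ζ => g ζ - cexp p {x} g ζ) η := by
    intro η
    rw [cexp_sub, cexp_cexp, Finset.union_comm, ← cexp_cexp]
  have hfe : (fun η => (cexp p C g η - cexp p {x} (cexp p C g) η) ^ 2)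
      = fun η => (cexp p C (fun ζ => g ζ - cexp p {x} g ζ) η) ^ 2 :=
    funext fun η => by rw [h2 η]
  calc mean p (fun η => (cexp p C g η - cexp p {x} (cexp p C g) η) ^ 2)
      = mean p (fun η => (cexp p C (fun ζ => g ζ - cexp p {x} g ζ) η) ^ 2) := by
        rw [hfe]
    _ ≤ mean p (cexp p C (fun ζ => (g ζ - cexp p {x} g ζ) ^ 2)) :=
        mean_mono hp0 hp1 fun η => jensen hp0 hp1 C _ η
    _ = mean p (fun η => (g η - cexp p {x} g η) ^ 2) := mean_cexp _ _

lemma key (hp0 : 0 ≤ p) (hp1 : p ≤ 1) (r : V → ℕ) (D : V → Finset V)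
    (hD : ∀ x y, y ∈ D x → r x < r y) (f : (V → Bool) → ℝ) :
    ∀ S : Finset V, (∀ x ∈ S, D x ⊆ S) →
      mean p (fun η => f η ^ 2) - mean p (fun η => (cexp p S f η) ^ 2)
        ≤ ∑ x ∈ S, mean p (cvar p {x} (cexp p (D x) f)) := by
  intro S
  induction S using Finset.strongInduction with
  | _ S ih =>
    intro hS
    rcases S.eq_empty_or_nonempty with rfl | hne
    · have hemp : (fun η : V → Bool => (cexp p (∅ : Finset V) f η) ^ 2)
          = fun η => f η ^ 2 := funext fun η => by rw [cexp_empty]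
      simp [hemp]
    · obtain ⟨x, hxS, hmin⟩ := S.exists_min_image r hne
      set S' := S.erase x with hS'def
      have hxS' : x ∉ S' := Finset.notMem_erase x S
      have hsub : S' ⊂ S := Finset.erase_ssubset hxS
      have hDx : D x ⊆ S' := by
        intro y hy
        refine Finset.mem_erase.2 ⟨fun h => ?_, hS x hxS hy⟩
        subst h
        exact absurd (hD _ _ hy) (lt_irrefl _)
      have hS'cl : ∀ y ∈ S', D y ⊆ S' := by
        intro y hyS' z hz
        have hyS := Finset.mem_of_mem_erase hyS'
        refine Finset.mem_erase.2 ⟨fun h => ?_, hS y hyS hz⟩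
        subst h
        exact absurd (hD _ _ hz) (not_lt.2 (hmin y hyS))
      have hins : insert x S' = S := Finset.insert_erase hxS
      have e1 : mean p (cvar p {x} (cexp p S' f))
          = mean p (fun η => (cexp p S' f η) ^ 2)
            - mean p (fun η => (cexp p S f η) ^ 2) := by
        rw [mean_cvar]
        have hfe : (fun η => (cexp p {x} (cexp p S' f) η) ^ 2)
            = fun η => (cexp p S f η) ^ 2 := funext fun η => by
          rw [cexp_cexp, ← Finset.insert_eq, hins]
        rw [hfe]
      have efun : cexp p S' f = cexp p (S' \ D x) (cexp p (D x) f) := by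
        funext η
        rw [cexp_cexp, Finset.sdiff_union_of_subset hDx]
      have hcon : mean p (cvar p {x} (cexp p S' f))
          ≤ mean p (cvar p {x} (cexp p (D x) f)) := by
        rw [efun]
        exact contract hp0 hp1 x (S' \ D x) (cexp p (D x) f)
      have hIH := ih S' hsub hS'cl
      have hsum : ∑ y ∈ S', mean p (cvar p {y} (cexp p (D y) f))
          + mean p (cvar p {x} (cexp p (D x) f))
          = ∑ y ∈ S, mean p (cvar p {y} (cexp p (D y) f)) :=
        Finset.sum_erase_add S _ hxS
      have hstep : mean p (fun η => (cexp p S' f η) ^ 2)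
          - mean p (fun η => (cexp p S f η) ^ 2)
          ≤ mean p (cvar p {x} (cexp p (D x) f)) := e1 ▸ hcon
      linarith

end TreeVarAux


theorem tree_variance_decomposition (k n : ℕ) (p : ℝ) (hk : 1 ≤ k) (hp : p ∈ Set.Ioo (0 : ℝ) 1)
    (f : (TV k n → Bool) → ℝ) :
    varTot p f ≤ ∑ x : TV k n, mean p (cvar p {x} (cexp p (descSet x) f)) := by
  have hD : ∀ x y : TV k n, y ∈ descSet x → x.1.val < y.1.val := by
    intro x y hy
    obtain ⟨h, -⟩ := (Finset.mem_filter.1 hy).2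
    exact h
  have hkey := TreeVarAux.key hp.1.le hp.2.le (fun x : TV k n => x.1.val) descSet hD f
    Finset.univ (fun x _ => Finset.subset_univ _)
  have hvar : mean p (fun η => (cexp p (Finset.univ : Finset (TV k n)) f η) ^ 2)
      = (mean p f) ^ 2 := by
    have h1 : (fun η : TV k n → Bool => (cexp p (Finset.univ : Finset (TV k n)) f η) ^ 2)
        = fun _ => (mean p f) ^ 2 := funext fun η => by rw [TreeVarAux.cexp_univ]
    rw [h1, TreeVarAux.mean_const]
  unfold varTot
  rw [← hvar]
  exact hkey
end
end
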